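/- arXiv:2103.03942 — 9 statements merged into one kernel-verified Lean document; each statement's English description precedes it below -/
import Mathlib

section
/- Let p > 3 be a prime. For the one-parameter family y² = x³ − x² − x + t, the second-moment sum satisfies ∑_{t mod p} a_t(p)² = p² − 2p − χ(−3)·p, where a_t(p) := −∑_{x mod p} χ(x³ − x² − x + t). -/
open Finset

section Aux

variable {p : ℕ} [Fact p.Prime]

lemma qc_shift_sum (hp : 3 < p) {a : ZMod p} (ha : a ≠ 0) :
    ∑ t : ZMod p, quadraticChar (ZMod p) (t * (t + a)) = -1 := by
  have hchar : ringChar (ZMod p) ≠ 2 := by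
    rw [ZMod.ringChar_zmod_n]; omega
  have h1 : ∑ t : ZMod p, quadraticChar (ZMod p) (t * (t + a)) =
      ∑ t ∈ univ.erase (0 : ZMod p), quadraticChar (ZMod p) (1 + a * t⁻¹) := by
    rw [← Finset.add_sum_erase univ _ (mem_univ (0 : ZMod p))]
    rw [show (0 : ZMod p) * (0 + a) = 0 by ring, quadraticChar_zero, zero_add]
    refine Finset.sum_congr rfl fun t ht => ?_
    have ht0 : t ≠ 0 := by simpa using ht
    have : t * (t + a) = t ^ 2 * (1 + a * t⁻¹) := by
      field_simp
    rw [this, map_mul, quadraticChar_sq_one' ht0, one_mul]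
  rw [h1]
  have h2 : ∑ t ∈ univ.erase (0 : ZMod p), quadraticChar (ZMod p) (1 + a * t⁻¹) =
      ∑ u ∈ univ.erase (1 : ZMod p), quadraticChar (ZMod p) u := by
    refine Finset.sum_nbij' (fun t => 1 + a * t⁻¹) (fun u => a * (u - 1)⁻¹) ?_ ?_ ?_ ?_ ?_
    · intro t ht
      have ht0 : t ≠ 0 := by simpa using ht
      simp only [mem_erase, mem_univ, and_true]
      intro h
      have : a * t⁻¹ = 0 := by linear_combination h
      exact ha (by simpa [inv_eq_zero, ht0] using this)
    · intro u hu
      have hu1 : u ≠ 1 := by simpa using hu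
      simp only [mem_erase, mem_univ, and_true]
      exact mul_ne_zero ha (inv_ne_zero (sub_ne_zero.mpr hu1))
    · intro t ht
      have ht0 : t ≠ 0 := by simpa using ht
      have hat : a * t⁻¹ ≠ 0 := mul_ne_zero ha (inv_ne_zero ht0)
      field_simp
      rw [add_sub_cancel_left, div_self ha]
    · intro u hu
      have hu1 : u ≠ 1 := by simpa using hu
      have h1 : u - 1 ≠ 0 := sub_ne_zero.mpr hu1
      field_simp
      ring
    · intro t ht; rfl
  rw [h2, Finset.sum_erase_eq_sub (by simp), quadraticChar_sum_zero hchar]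
  simp

lemma qc_prod_sum (hp : 3 < p) (a b : ZMod p) :
    ∑ t : ZMod p, quadraticChar (ZMod p) ((t + a) * (t + b)) =
      if a = b then (p : ℤ) - 1 else -1 := by
  have hchar : ringChar (ZMod p) ≠ 2 := by rw [ZMod.ringChar_zmod_n]; omega
  have hshift : ∑ t : ZMod p, quadraticChar (ZMod p) ((t + a) * (t + b)) =
      ∑ t : ZMod p, quadraticChar (ZMod p) (t * (t + (b - a))) := by
    refine Fintype.sum_equiv (Equiv.addRight a) _ _ fun t => ?_
    simp only [Equiv.coe_addRight]
    ring_nf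
  rw [hshift]
  by_cases hab : a = b
  · have : b - a = 0 := by rw [hab]; ring
    rw [this]
    simp only [add_zero, ← sq]
    rw [if_pos hab]
    have : ∀ t : ZMod p, quadraticChar (ZMod p) (t ^ 2) = if t = 0 then 0 else 1 := by
      intro t
      by_cases ht : t = 0
      · simp [ht]
      · simp [ht, quadraticChar_sq_one' ht]
    rw [Finset.sum_congr rfl fun t _ => this t]
    rw [Finset.sum_ite, Finset.sum_const, Finset.sum_const, Finset.filter_eq']
    simp only [mem_univ, if_true, card_singleton, smul_zero, zero_add, nsmul_eq_mul, mul_one]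
    rw [Finset.filter_ne', Finset.card_erase_of_mem (mem_univ _), card_univ, ZMod.card]
    have : 1 ≤ p := le_of_lt (by omega)
    push_cast [this]
    ring
  · rw [if_neg hab]
    exact qc_shift_sum hp (sub_ne_zero.mpr (Ne.symm hab))

lemma qc_quad_card (hp : 3 < p) (b c : ZMod p) :
    (({x : ZMod p | x ^ 2 + b * x + c = 0} : Finset (ZMod p)).card : ℤ) =
      quadraticChar (ZMod p) (b ^ 2 - 4 * c) + 1 := by
  have hchar : ringChar (ZMod p) ≠ 2 := by rw [ZMod.ringChar_zmod_n]; omega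
  have h2 : (2 : ZMod p) ≠ 0 := by
    intro h
    have : ((2 : ℕ) : ZMod p) = 0 := by push_cast; exact h
    rw [ZMod.natCast_eq_zero_iff] at this
    have := Nat.le_of_dvd (by norm_num) this
    omega
  have h4 : (4 : ZMod p) ≠ 0 := by
    have : (4 : ZMod p) = 2 * 2 := by norm_num
    rw [this]; exact mul_ne_zero h2 h2
  have key : ({x : ZMod p | x ^ 2 + b * x + c = 0} : Finset (ZMod p)).card =
      {x : ZMod p | x ^ 2 = b ^ 2 - 4 * c}.toFinset.card := by
    refine Finset.card_nbij' (fun x => 2 * x + b) (fun z => (z - b) * 2⁻¹) ?_ ?_ ?_ ?_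
    · intro x hx
      simp only [Finset.mem_coe, mem_filter, mem_univ, true_and, Set.mem_setOf_eq] at hx ⊢
      rw [Set.mem_toFinset, Set.mem_setOf_eq]
      have : (2 * x + b) ^ 2 = 4 * (x ^ 2 + b * x + c) + (b ^ 2 - 4 * c) := by ring
      rw [this, hx]; ring
    · intro z hz
      rw [Finset.mem_coe, Set.mem_toFinset, Set.mem_setOf_eq] at hz
      simp only [Finset.mem_coe, mem_filter, mem_univ, true_and, Set.mem_setOf_eq]
      have h4' : (4 : ZMod p) * (((z - b) * 2⁻¹) ^ 2 + b * ((z - b) * 2⁻¹) + c) =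
          z ^ 2 - (b ^ 2 - 4 * c) := by
        field_simp
        ring
      rw [hz, sub_self] at h4'
      exact (mul_eq_zero.mp h4').resolve_left h4
    · intro x hx
      field_simp
      ring
    · intro z hz
      field_simp
      ring
  rw [key, quadraticChar_card_sqrts hchar]

lemma two_ne (hp : 3 < p) : (2 : ZMod p) ≠ 0 := by
  intro h
  have : ((2 : ℕ) : ZMod p) = 0 := by push_cast; exact h
  rw [ZMod.natCast_eq_zero_iff] at this
  have := Nat.le_of_dvd (by norm_num) this
  omega

lemma three_ne (hp : 3 < p) : (3 : ZMod p) ≠ 0 := by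
  intro h
  have : ((3 : ℕ) : ZMod p) = 0 := by push_cast; exact h
  rw [ZMod.natCast_eq_zero_iff] at this
  have := Nat.le_of_dvd (by norm_num) this
  omega

lemma conic_card (hp : 3 < p) :
    (({z : ZMod p × ZMod p |
        z.1 ^ 2 + z.1 * z.2 + z.2 ^ 2 - z.1 - z.2 - 1 = 0} : Finset (ZMod p × ZMod p)).card : ℤ)
      = (p : ℤ) - quadraticChar (ZMod p) (-3) := by
  have h3 : (3 : ZMod p) ≠ 0 := three_ne hp
  have h2 : (2 : ZMod p) ≠ 0 := two_ne hp
  -- card as double sum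
  have hcard : (({z : ZMod p × ZMod p |
        z.1 ^ 2 + z.1 * z.2 + z.2 ^ 2 - z.1 - z.2 - 1 = 0} : Finset (ZMod p × ZMod p)).card : ℤ)
      = ∑ y : ZMod p, (({x : ZMod p |
          x ^ 2 + (y - 1) * x + (y ^ 2 - y - 1) = 0} : Finset (ZMod p)).card : ℤ) := by
    rw [Finset.card_filter]
    push_cast
    rw [Fintype.sum_prod_type_right]
    refine Finset.sum_congr rfl fun y _ => ?_
    rw [Finset.card_filter]
    push_cast
    refine Finset.sum_congr rfl fun x _ => ?_
    congr 1
    exact propext ⟨fun h => by linear_combination h, fun h => by linear_combination h⟩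
  rw [hcard]
  have hquad : ∀ y : ZMod p, (({x : ZMod p |
          x ^ 2 + (y - 1) * x + (y ^ 2 - y - 1) = 0} : Finset (ZMod p)).card : ℤ)
      = quadraticChar (ZMod p) ((-3) * ((y + 1) * (y + (-5) * 3⁻¹))) + 1 := by
    intro y
    rw [qc_quad_card hp]
    congr 2
    field_simp
    ring
  rw [Finset.sum_congr rfl fun y _ => hquad y]
  rw [Finset.sum_add_distrib]
  have hsplit : ∑ y : ZMod p, quadraticChar (ZMod p) ((-3) * ((y + 1) * (y + (-5) * 3⁻¹)))
      = quadraticChar (ZMod p) (-3) *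
        ∑ y : ZMod p, quadraticChar (ZMod p) ((y + 1) * (y + (-5) * 3⁻¹)) := by
    rw [Finset.mul_sum]
    exact Finset.sum_congr rfl fun y _ => map_mul _ _ _
  rw [hsplit, qc_prod_sum hp, if_neg, Finset.sum_const, card_univ, ZMod.card]
  · push_cast; ring
  · intro h
    field_simp at h
    have h8 : (8 : ZMod p) = 0 := by linear_combination h
    have : (8 : ZMod p) = 2 ^ 3 := by norm_num
    exact pow_ne_zero 3 h2 (this ▸ h8)

lemma N_card (hp : 3 < p) :
    (({z : ZMod p × ZMod p |
        z.1 ^ 3 - z.1 ^ 2 - z.1 = z.2 ^ 3 - z.2 ^ 2 - z.2} : Finset (ZMod p × ZMod p)).card : ℤ)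
      = 2 * (p : ℤ) - 2 - quadraticChar (ZMod p) (-3) := by
  have h2 : (2 : ZMod p) ≠ 0 := two_ne hp
  have h3 : (3 : ZMod p) ≠ 0 := three_ne hp
  set D : Finset (ZMod p × ZMod p) := {z : ZMod p × ZMod p | z.1 = z.2} with hD
  set Q : Finset (ZMod p × ZMod p) :=
    {z : ZMod p × ZMod p | z.1 ^ 2 + z.1 * z.2 + z.2 ^ 2 - z.1 - z.2 - 1 = 0} with hQ
  have hunion : ({z : ZMod p × ZMod p |
      z.1 ^ 3 - z.1 ^ 2 - z.1 = z.2 ^ 3 - z.2 ^ 2 - z.2} : Finset (ZMod p × ZMod p)) = D ∪ Q := by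
    ext z
    simp only [hD, hQ, mem_union, mem_filter, mem_univ, true_and, Set.mem_setOf_eq]
    constructor
    · intro h
      have hfac : (z.1 - z.2) * (z.1 ^ 2 + z.1 * z.2 + z.2 ^ 2 - z.1 - z.2 - 1) = 0 := by
        linear_combination h
      rcases mul_eq_zero.mp hfac with h' | h'
      · exact Or.inl (sub_eq_zero.mp h')
      · exact Or.inr h'
    · rintro (h | h)
      · rw [h]
      · linear_combination (z.1 - z.2) * h
  have hDcard : D.card = p := by
    have hbij : D.card = (univ : Finset (ZMod p)).card := by
      refine Finset.card_nbij' (fun z => z.1) (fun x => (x, x)) ?_ ?_ ?_ ?_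
      · intro z _; exact mem_univ _
      · intro x _; simp [hD]
      · intro z hz
        simp only [hD, Finset.mem_coe, mem_filter, mem_univ, true_and, Set.mem_setOf_eq] at hz
        exact Prod.ext rfl hz
      · intro x _; rfl
    rw [hbij, card_univ, ZMod.card]
  have hinter : D ∩ Q = ({(1, 1), (-3⁻¹, -3⁻¹)} : Finset (ZMod p × ZMod p)) := by
    have hm : (1 : ZMod p) ≠ -3⁻¹ := by
      intro h
      have h4 : (4 : ZMod p) = 0 := by
        field_simp at h
        linear_combination h
      have : (4 : ZMod p) = 2 ^ 2 := by norm_num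
      exact pow_ne_zero 2 h2 (this ▸ h4)
    ext z
    simp only [hD, hQ, mem_inter, mem_filter, mem_univ, true_and, Set.mem_setOf_eq,
      mem_insert, mem_singleton]
    constructor
    · rintro ⟨h1, h2'⟩
      rw [← h1] at h2'
      have hfac : (z.1 - 1) * (3 * z.1 + 1) = 0 := by linear_combination h2'
      rcases mul_eq_zero.mp hfac with h' | h'
      · left
        have : z.1 = 1 := by linear_combination h'
        exact Prod.ext this (h1 ▸ this)
      · right
        have : z.1 = -3⁻¹ := by
          field_simp
          linear_combination h'
        exact Prod.ext this (h1 ▸ this)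
    · have hm3 : (3 : ZMod p) * (-3⁻¹) + 1 = 0 := by field_simp; ring
      rintro (h | h) <;> subst h
      · exact ⟨rfl, by ring⟩
      · exact ⟨rfl, by linear_combination ((-3⁻¹ : ZMod p) - 1) * hm3⟩
  have hintercard : (D ∩ Q).card = 2 := by
    rw [hinter]
    refine Finset.card_pair ?_
    intro h
    exact (by
      intro hq
      have h4 : (4 : ZMod p) = 0 := by
        field_simp at hq
        linear_combination hq
      have : (4 : ZMod p) = 2 ^ 2 := by norm_num
      exact pow_ne_zero 2 h2 (this ▸ h4) : (1 : ZMod p) ≠ -3⁻¹) (congrArg Prod.fst h)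
  rw [hunion]
  have hcu := Finset.card_union_add_card_inter D Q
  have hq : (Q.card : ℤ) = (p : ℤ) - quadraticChar (ZMod p) (-3) := conic_card hp
  have hz := congrArg (Nat.cast : ℕ → ℤ) hcu
  push_cast [hDcard, hintercard] at hz
  linarith [hq, hz]

end Aux

/-- For a prime `p > 3` and the family `y² = x³ - x² - x + t`, the
second-moment sum equals `p² - 2p - χ(-3) p`. -/
theorem second_moment_family_one (p : ℕ) [Fact p.Prime] (hp : 3 < p) :
    ∑ t : ZMod p,
      (-∑ x : ZMod p,
        legendreSym p ((x.val : ℤ) ^ 3 - (x.val : ℤ) ^ 2 - (x.val : ℤ) + (t.val : ℤ))) ^ 2 =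
      (p : ℤ) ^ 2 - 2 * (p : ℤ) - legendreSym p (-3) * (p : ℤ) := by
  have hleg : ∀ t x : ZMod p,
      legendreSym p ((x.val : ℤ) ^ 3 - (x.val : ℤ) ^ 2 - (x.val : ℤ) + (t.val : ℤ)) =
      quadraticChar (ZMod p) (x ^ 3 - x ^ 2 - x + t) := by
    intro t x
    rw [legendreSym]
    congr 1
    push_cast [ZMod.natCast_val, ZMod.cast_id]
    ring
  have hleg3 : legendreSym p (-3) = quadraticChar (ZMod p) (-3 : ZMod p) := by
    rw [legendreSym]
    congr 1
    push_cast
    ring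
  rw [hleg3]
  calc ∑ t : ZMod p, (-∑ x : ZMod p,
        legendreSym p ((x.val : ℤ) ^ 3 - (x.val : ℤ) ^ 2 - (x.val : ℤ) + (t.val : ℤ))) ^ 2
      = ∑ t : ZMod p, (∑ x : ZMod p,
          quadraticChar (ZMod p) (x ^ 3 - x ^ 2 - x + t)) ^ 2 := by
        refine Finset.sum_congr rfl fun t _ => ?_
        rw [neg_pow, Finset.sum_congr rfl fun x _ => hleg t x]
        ring
    _ = ∑ t : ZMod p, ∑ x : ZMod p, ∑ y : ZMod p,
          quadraticChar (ZMod p) ((t + (x ^ 3 - x ^ 2 - x)) * (t + (y ^ 3 - y ^ 2 - y))) := by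
        refine Finset.sum_congr rfl fun t _ => ?_
        rw [sq, Finset.sum_mul_sum]
        refine Finset.sum_congr rfl fun x _ => Finset.sum_congr rfl fun y _ => ?_
        rw [← map_mul]
        congr 1
        ring
    _ = ∑ x : ZMod p, ∑ y : ZMod p,
          (if (x ^ 3 - x ^ 2 - x) = (y ^ 3 - y ^ 2 - y) then (p : ℤ) - 1 else -1) := by
        rw [Finset.sum_comm]
        refine Finset.sum_congr rfl fun x _ => ?_
        rw [Finset.sum_comm]
        exact Finset.sum_congr rfl fun y _ => qc_prod_sum hp _ _
    _ = ∑ z : ZMod p × ZMod p,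
          (if (z.1 ^ 3 - z.1 ^ 2 - z.1) = (z.2 ^ 3 - z.2 ^ 2 - z.2) then (p : ℤ) - 1 else -1) := by
        rw [Fintype.sum_prod_type]
    _ = (p : ℤ) ^ 2 - 2 * (p : ℤ) - quadraticChar (ZMod p) (-3 : ZMod p) * (p : ℤ) := by
        have : ∀ z : ZMod p × ZMod p,
            (if (z.1 ^ 3 - z.1 ^ 2 - z.1) = (z.2 ^ 3 - z.2 ^ 2 - z.2) then (p : ℤ) - 1 else -1)
            = (if (z.1 ^ 3 - z.1 ^ 2 - z.1) = (z.2 ^ 3 - z.2 ^ 2 - z.2) then (p : ℤ) else 0) - 1 := by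
          intro z
          split <;> ring
        rw [Finset.sum_congr rfl fun z _ => this z, Finset.sum_sub_distrib,
          Finset.sum_ite, Finset.sum_const, Finset.sum_const, Finset.sum_const,
          card_univ, Fintype.card_prod, ZMod.card]
        have hN := N_card (p := p) hp
        simp only [smul_zero, add_zero, nsmul_eq_mul, mul_one, smul_eq_mul]
        rw [mul_comm]
        rw [hN]
        push_cast
        ring
end

section
/- Let p ≥ 5 be a prime. For the one-parameter family y² = x³ − t x² + (x − 1) t², the second-moment sum satisfies ∑_{t mod p} a_t(p)² = p² − 2p·δ_{2,3}(p) − 2p·χ(−3) − p·χ(−2) − (∑_{x mod p} χ(x³ − x² + x))², where a_t(p) := −∑_{x mod p} χ(x³ − t x² + x t² − t²). -/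
open Finset

section Aux
variable {p : ℕ} [Fact p.Prime]

private lemma char_ne_two (hp : 5 ≤ p) : ringChar (ZMod p) ≠ 2 := by
  rw [ZMod.ringChar_zmod_n]; omega

private lemma smf_two_ne (hp : 5 ≤ p) : (2 : ZMod p) ≠ 0 := by
  have : ((2 : ℕ) : ZMod p) ≠ 0 := by
    rw [Ne, ZMod.natCast_eq_zero_iff]
    intro h; have := Nat.le_of_dvd (by norm_num) h; omega
  simpa using this

private lemma smf_three_ne (hp : 5 ≤ p) : (3 : ZMod p) ≠ 0 := by
  have : ((3 : ℕ) : ZMod p) ≠ 0 := by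
    rw [Ne, ZMod.natCast_eq_zero_iff]
    intro h; have := Nat.le_of_dvd (by norm_num) h; omega
  simpa using this

/-- number of square roots as an if-sum -/
private lemma sqrt_count (hp : 5 ≤ p) (a : ZMod p) :
    ∑ x : ZMod p, (if x ^ 2 = a then (1 : ℤ) else 0) =
      quadraticChar (ZMod p) a + 1 := by
  have h := quadraticChar_card_sqrts (char_ne_two hp) a
  rw [← h]
  rw [Finset.sum_boole]
  congr 1
  rw [Set.toFinset_setOf]

end Aux

section Aux2
variable {p : ℕ} [Fact p.Prime]

private lemma lemC (hp : 5 ≤ p) (e : ZMod p) :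
    ∑ u : ZMod p, quadraticChar (ZMod p) (u ^ 2 - e) =
      if e = 0 then ((p : ℤ) - 1) else -1 := by
  set χ := quadraticChar (ZMod p) with hχ
  by_cases he : e = 0
  · subst he
    simp only [sub_zero, if_true]
    have : ∀ u : ZMod p, χ (u ^ 2) = 1 - (if u = 0 then (1:ℤ) else 0) := by
      intro u
      by_cases hu : u = 0
      · simp [hu, MulChar.map_zero]
      · simp only [hu, if_false, sub_zero]; exact quadraticChar_sq_one' hu
    rw [Finset.sum_congr rfl fun u _ => this u, Finset.sum_sub_distrib]
    simp [ZMod.card]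
  · rw [if_neg he]
    have step1 : ∀ u : ZMod p, χ (u ^ 2 - e)
        = ∑ w : ZMod p, (if u ^ 2 = w then (1:ℤ) else 0) * χ (w - e) := by
      intro u
      rw [Finset.sum_eq_single (u ^ 2)]
      · simp
      · intro w _ hw; simp [Ne.symm hw]
      · simp
    rw [Finset.sum_congr rfl fun u _ => step1 u, Finset.sum_comm]
    have step2 : ∀ w : ZMod p,
        ∑ u : ZMod p, (if u ^ 2 = w then (1:ℤ) else 0) * χ (w - e)
          = (χ w + 1) * χ (w - e) := by
      intro w
      rw [← Finset.sum_mul, sqrt_count hp]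
    rw [Finset.sum_congr rfl fun w _ => step2 w]
    have expand : ∀ w : ZMod p, (χ w + 1) * χ (w - e) = χ w * χ (w - e) + χ (w - e) := by
      intro w; ring
    rw [Finset.sum_congr rfl fun w _ => expand w, Finset.sum_add_distrib]
    have shift : ∑ w : ZMod p, χ (w - e) = 0 := by
      have h := Equiv.sum_comp (Equiv.subRight e) χ
      simp only [Equiv.subRight_apply] at h
      rw [h]
      exact quadraticChar_sum_zero (char_ne_two hp)
    rw [shift, add_zero]
    -- now the main sum
    rw [← Finset.add_sum_erase _ _ (Finset.mem_univ (0 : ZMod p))]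
    simp only [MulChar.map_zero, zero_mul, zero_add]
    have key : ∀ w ∈ Finset.univ.erase (0 : ZMod p),
        χ w * χ (w - e) = χ (1 - e * w⁻¹) := by
      intro w hw
      have hw0 : w ≠ 0 := Finset.ne_of_mem_erase hw
      have : w * (w - e) = w ^ 2 * (1 - e * w⁻¹) := by
        field_simp
      rw [← map_mul, this, map_mul, quadraticChar_sq_one' hw0, one_mul]
    rw [Finset.sum_congr rfl key]
    have bij : ∑ w ∈ Finset.univ.erase (0 : ZMod p), χ (1 - e * w⁻¹)
        = ∑ v ∈ Finset.univ.erase (0 : ZMod p), χ (1 - v) := by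
      refine Finset.sum_nbij' (fun w => e * w⁻¹) (fun v => e * v⁻¹) ?_ ?_ ?_ ?_ ?_
      · intro w hw
        have hw0 : w ≠ 0 := Finset.ne_of_mem_erase hw
        simp [Finset.mem_erase, mul_ne_zero he (inv_ne_zero hw0)]
      · intro v hv
        have hv0 : v ≠ 0 := Finset.ne_of_mem_erase hv
        simp [Finset.mem_erase, mul_ne_zero he (inv_ne_zero hv0)]
      · intro w hw
        have hw0 : w ≠ 0 := Finset.ne_of_mem_erase hw
        field_simp
      · intro v hv
        have hv0 : v ≠ 0 := Finset.ne_of_mem_erase hv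
        field_simp
      · intro w hw; rfl
    rw [bij]
    have : ∑ v ∈ Finset.univ.erase (0 : ZMod p), χ (1 - v)
        = (∑ v : ZMod p, χ (1 - v)) - χ 1 := by
      rw [← Finset.add_sum_erase _ _ (Finset.mem_univ (0 : ZMod p))]
      simp
    rw [this]
    have : ∑ v : ZMod p, χ (1 - v) = 0 := by
      have h := Equiv.sum_comp (Equiv.subLeft (1 : ZMod p)) χ
      simp only [Equiv.subLeft_apply] at h
      rw [h]
      exact quadraticChar_sum_zero (char_ne_two hp)
    simp [this]

end Aux2

section Aux3
variable {p : ℕ} [Fact p.Prime]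

private lemma lemLin (hp : 5 ≤ p) {b : ZMod p} (hb : b ≠ 0) (c : ZMod p) :
    ∑ t : ZMod p, quadraticChar (ZMod p) (b * t + c) = 0 := by
  set χ := quadraticChar (ZMod p) with hχ
  have hbij : Function.Bijective (fun t : ZMod p => b * t + c) :=
    ((Equiv.mulLeft₀ b hb).trans (Equiv.addRight c)).bijective
  have h := Fintype.sum_bijective _ hbij (fun t => χ (b * t + c)) χ (fun t => rfl)
  rw [h]
  exact quadraticChar_sum_zero (char_ne_two hp)

private lemma lemB (hp : 5 ≤ p) {a : ZMod p} (ha : a ≠ 0) (b c : ZMod p) :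
    ∑ t : ZMod p, quadraticChar (ZMod p) (a * t ^ 2 + b * t + c) =
      quadraticChar (ZMod p) a *
        (if b ^ 2 - 4 * a * c = 0 then ((p : ℤ) - 1) else -1) := by
  set χ := quadraticChar (ZMod p) with hχ
  have h2 : (2 : ZMod p) ≠ 0 := smf_two_ne hp
  have h4a2 : (4 : ZMod p) * a ^ 2 ≠ 0 := by
    have h4 : (4 : ZMod p) ≠ 0 := by
      have : (4 : ZMod p) = 2 * 2 := by norm_num
      rw [this]; exact mul_ne_zero h2 h2
    exact mul_ne_zero h4 (pow_ne_zero 2 ha)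
  set e := (b ^ 2 - 4 * a * c) / (4 * a ^ 2) with he
  have key : ∀ u : ZMod p, a * (u - b / (2 * a)) ^ 2 + b * (u - b / (2 * a)) + c
      = a * (u ^ 2 - e) := by
    intro u
    rw [he]
    have h4 : (4 : ZMod p) ≠ 0 := left_ne_zero_of_mul h4a2
    field_simp
    ring
  have reindex : ∑ t : ZMod p, χ (a * t ^ 2 + b * t + c)
      = ∑ u : ZMod p, χ (a * (u - b / (2 * a)) ^ 2 + b * (u - b / (2 * a)) + c) := by
    have h := Equiv.sum_comp (Equiv.subRight (b / (2 * a)))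
      (fun t => χ (a * t ^ 2 + b * t + c))
    simp only [Equiv.subRight_apply] at h
    rw [← h]
  rw [reindex, Finset.sum_congr rfl fun u _ => congrArg χ (key u)]
  have : ∀ u : ZMod p, χ (a * (u ^ 2 - e)) = χ a * χ (u ^ 2 - e) := fun u => map_mul χ _ _
  rw [Finset.sum_congr rfl fun u _ => this u, ← Finset.mul_sum, lemC hp]
  congr 1
  have : e = 0 ↔ b ^ 2 - 4 * a * c = 0 := by
    rw [he, div_eq_zero_iff]
    simp [h4a2]
  simp only [this]

private lemma lemA (hp : 5 ≤ p) (b c : ZMod p) :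
    ∑ x : ZMod p, (if x ^ 2 + b * x + c = 0 then (1 : ℤ) else 0) =
      1 + quadraticChar (ZMod p) (b ^ 2 - 4 * c) := by
  set χ := quadraticChar (ZMod p) with hχ
  have h2 : (2 : ZMod p) ≠ 0 := smf_two_ne hp
  have h4 : (4 : ZMod p) ≠ 0 := by
    have : (4 : ZMod p) = 2 * 2 := by norm_num
    rw [this]; exact mul_ne_zero h2 h2
  have cond : ∀ x : ZMod p, (x ^ 2 + b * x + c = 0) ↔ ((x + b / 2) ^ 2 = (b ^ 2 - 4 * c) / 4) := by
    intro x
    have expand : (x + b / 2) ^ 2 - (b ^ 2 - 4 * c) / 4 = x ^ 2 + b * x + c := by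
      field_simp [h4]
      ring
    constructor
    · intro h
      have := expand
      rw [h] at this
      linear_combination this
    · intro h
      rw [← expand, h]
      ring
  rw [Finset.sum_congr rfl fun x _ => by rw [if_congr (cond x) rfl rfl]]
  have reindex : ∑ x : ZMod p, (if (x + b / 2) ^ 2 = (b ^ 2 - 4 * c) / 4 then (1:ℤ) else 0)
      = ∑ u : ZMod p, (if u ^ 2 = (b ^ 2 - 4 * c) / 4 then (1:ℤ) else 0) := by
    have h := Equiv.sum_comp (Equiv.addRight (b / 2))
      (fun u => if u ^ 2 = (b ^ 2 - 4 * c) / 4 then (1:ℤ) else 0)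
    simp only [Equiv.coe_addRight] at h
    exact h
  rw [reindex, sqrt_count hp]
  have : χ ((b ^ 2 - 4 * c) / 4) = χ (b ^ 2 - 4 * c) := by
    have h4' : ((b ^ 2 - 4 * c) / 4 : ZMod p) = (b ^ 2 - 4 * c) * (2⁻¹) ^ 2 := by
      field_simp [h4]
      try ring
      try tauto
    rw [h4', map_mul, quadraticChar_sq_one' (inv_ne_zero h2), mul_one]
  rw [this, add_comm]

end Aux3

section Aux4
variable {p : ℕ} [Fact p.Prime]

private lemma leg_neg_three (hp : 5 ≤ p) :
    legendreSym p (-3) = if p % 3 = 2 then -1 else 1 := by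
  have hpp : p.Prime := Fact.out
  have hodd : Odd p := hpp.odd_of_ne_two (by omega)
  have h3 : ¬ (3 ∣ p) := by
    intro h
    rcases (Nat.Prime.eq_one_or_self_of_dvd hpp 3 h) with h' | h' <;> omega
  have hmod : p % 3 = 1 ∨ p % 3 = 2 := by omega
  rw [jacobiSym.legendreSym.to_jacobiSym]
  have : ((-3 : ℤ)) = (-1) * 3 := by norm_num
  rw [this, jacobiSym.mul_left, jacobiSym.at_neg_one hodd,
    ZMod.χ₄_eq_neg_one_pow (Nat.odd_iff.mp hodd)]
  have h33 : ((3 : ℤ)) = ((3 : ℕ) : ℤ) := by norm_num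
  rw [h33, jacobiSym.quadratic_reciprocity (by decide) hodd]
  have : (3 / 2 : ℕ) = 1 := by norm_num
  rw [this, one_mul, ← mul_assoc, ← pow_add, ← two_mul, pow_mul, neg_one_sq, one_pow, one_mul]
  rw [jacobiSym.mod_left]
  have hcast : ((p : ℤ) % ((3:ℕ) : ℤ)) = ((p % 3 : ℕ) : ℤ) := by
    push_cast
    rfl
  rw [hcast]
  rcases hmod with h | h
  · rw [h, if_neg (by omega)]
    exact jacobiSym.one_left 3
  · rw [h, if_pos rfl]
    norm_num [jacobiSym]

end Aux4

section MainLemma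
variable {p : ℕ} [Fact p.Prime]

private lemma claim2 (hp : 5 ≤ p) (A B : ZMod p) :
    ∑ t : ZMod p, quadraticChar (ZMod p) ((t * A - 1) * (t * B - 1))
      = (if A = B then (p : ℤ) else 0) - quadraticChar (ZMod p) A * quadraticChar (ZMod p) B := by
  set χ := quadraticChar (ZMod p) with hχ
  have hcard : Fintype.card (ZMod p) = p := ZMod.card p
  by_cases hA : A = 0
  · by_cases hB : B = 0
    · subst hA; subst hB
      have e1 : ∀ t : ZMod p, (t * 0 - 1) * (t * 0 - 1) = 1 := by intro t; ring
      rw [Finset.sum_congr rfl fun t _ => congrArg χ (e1 t)]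
      simp [Finset.sum_const, hcard, MulChar.map_zero]
    · subst hA
      have e1 : ∀ t : ZMod p, (t * 0 - 1) * (t * B - 1) = (-B) * t + 1 := by intro t; ring
      rw [Finset.sum_congr rfl fun t _ => congrArg χ (e1 t),
        lemLin hp (neg_ne_zero.mpr hB) 1]
      simp [MulChar.map_zero, Ne.symm hB]
  · by_cases hB : B = 0
    · subst hB
      have e1 : ∀ t : ZMod p, (t * A - 1) * (t * 0 - 1) = (-A) * t + 1 := by intro t; ring
      rw [Finset.sum_congr rfl fun t _ => congrArg χ (e1 t),
        lemLin hp (neg_ne_zero.mpr hA) 1]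
      simp [MulChar.map_zero, hA]
    · have e1 : ∀ t : ZMod p, (t * A - 1) * (t * B - 1)
          = (A * B) * t ^ 2 + (-(A + B)) * t + 1 := by intro t; ring
      rw [Finset.sum_congr rfl fun t _ => congrArg χ (e1 t),
        lemB hp (mul_ne_zero hA hB) _ _]
      have hdisc : (-(A + B)) ^ 2 - 4 * (A * B) * 1 = (A - B) ^ 2 := by ring
      rw [hdisc]
      by_cases hAB : A = B
      · subst hAB
        rw [if_pos (by simp), if_pos rfl, map_mul]
        have hq : χ A * χ A = 1 := by
          rw [← pow_two]; exact quadraticChar_sq_one hA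
        rw [hq]; ring
      · rw [if_neg (pow_ne_zero 2 (sub_ne_zero.mpr hAB)), if_neg hAB, map_mul]
        ring

private lemma inner_t (hp : 5 ≤ p) (A B : ZMod p) :
    ∑ t ∈ Finset.univ.erase (0 : ZMod p),
        quadraticChar (ZMod p) ((t * A - 1) * (t * B - 1))
      = (if A = B then (p : ℤ) else 0)
          - quadraticChar (ZMod p) A * quadraticChar (ZMod p) B - 1 := by
  set χ := quadraticChar (ZMod p) with hχ
  have h := Finset.add_sum_erase Finset.univ
    (fun t : ZMod p => χ ((t * A - 1) * (t * B - 1))) (Finset.mem_univ (0 : ZMod p))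
  rw [claim2 hp A B] at h
  have h0 : χ (((0:ZMod p) * A - 1) * ((0:ZMod p) * B - 1)) = 1 := by
    have e : ((0:ZMod p) * A - 1) * ((0:ZMod p) * B - 1) = 1 := by ring
    rw [e, map_one]
  have h' : χ (((0:ZMod p) * A - 1) * ((0:ZMod p) * B - 1))
      + ∑ t ∈ Finset.univ.erase (0 : ZMod p), χ ((t * A - 1) * (t * B - 1))
      = (if A = B then (p:ℤ) else 0) - χ A * χ B := h
  rw [h0] at h'
  linear_combination h'

private lemma step_sub (hp : 5 ≤ p) {t : ZMod p} (ht : t ≠ 0) :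
    ∑ x : ZMod p, quadraticChar (ZMod p) (x ^ 3 - t * x ^ 2 + x * t ^ 2 - t ^ 2)
      = ∑ x : ZMod p, quadraticChar (ZMod p) (t * (x ^ 3 - x ^ 2 + x) - 1) := by
  set χ := quadraticChar (ZMod p) with hχ
  have h := Fintype.sum_bijective (fun x : ZMod p => t * x)
    (mulLeft_bijective₀ t ht)
    (fun x : ZMod p => χ (t * (x ^ 3 - x ^ 2 + x) - 1))
    (fun x : ZMod p => χ (x ^ 3 - t * x ^ 2 + x * t ^ 2 - t ^ 2)) ?_
  · rw [← h]
  · intro x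
    show χ (t * (x ^ 3 - x ^ 2 + x) - 1)
        = χ ((t * x) ^ 3 - t * (t * x) ^ 2 + (t * x) * t ^ 2 - t ^ 2)
    have e : (t * x) ^ 3 - t * (t * x) ^ 2 + (t * x) * t ^ 2 - t ^ 2
        = t ^ 2 * (t * (x ^ 3 - x ^ 2 + x) - 1) := by ring
    rw [e, map_mul, quadraticChar_sq_one' ht, one_mul]

private lemma step_t0 (hp : 5 ≤ p) :
    ∑ x : ZMod p, quadraticChar (ZMod p)
        (x ^ 3 - (0:ZMod p) * x ^ 2 + x * (0:ZMod p) ^ 2 - (0:ZMod p) ^ 2) = 0 := by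
  set χ := quadraticChar (ZMod p) with hχ
  have e : ∀ x : ZMod p, x ^ 3 - (0:ZMod p) * x ^ 2 + x * (0:ZMod p) ^ 2 - (0:ZMod p) ^ 2
      = x ^ 2 * x := by intro x; ring
  rw [Finset.sum_congr rfl fun x _ => congrArg χ (e x)]
  have px : ∀ x : ZMod p, χ (x ^ 2 * x) = χ x := by
    intro x
    by_cases hx : x = 0
    · subst hx; rw [show (0:ZMod p)^2 * 0 = 0 by ring]
    · rw [map_mul, quadraticChar_sq_one' hx, one_mul]
  rw [Finset.sum_congr rfl fun x _ => px x]
  exact quadraticChar_sum_zero (char_ne_two hp)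

end MainLemma

section CountLemma
variable {p : ℕ} [Fact p.Prime]

private lemma count_eq (hp : 5 ≤ p) :
    ∑ x : ZMod p, ∑ y : ZMod p,
        (if (x ^ 3 - x ^ 2 + x) = (y ^ 3 - y ^ 2 + y) then (1 : ℤ) else 0)
      = (p : ℤ) + ((p : ℤ) - quadraticChar (ZMod p) (-3))
          - (1 + quadraticChar (ZMod p) (-2)) := by
  set χ := quadraticChar (ZMod p) with hχ
  have h2 : (2 : ZMod p) ≠ 0 := smf_two_ne hp
  have h3 : (3 : ZMod p) ≠ 0 := smf_three_ne hp
  have hcard : Fintype.card (ZMod p) = p := ZMod.card p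
  have geq : ∀ x y : ZMod p, ((x ^ 3 - x ^ 2 + x) = (y ^ 3 - y ^ 2 + y))
      ↔ (x = y ∨ x ^ 2 + x * y + y ^ 2 - x - y + 1 = 0) := by
    intro x y
    rw [← sub_eq_zero]
    have e : (x ^ 3 - x ^ 2 + x) - (y ^ 3 - y ^ 2 + y)
        = (x - y) * (x ^ 2 + x * y + y ^ 2 - x - y + 1) := by ring
    rw [e, mul_eq_zero, sub_eq_zero]
  have ifsplit : ∀ x y : ZMod p,
      (if (x ^ 3 - x ^ 2 + x) = (y ^ 3 - y ^ 2 + y) then (1 : ℤ) else 0)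
        = (if x = y then (1 : ℤ) else 0)
          + (if x ^ 2 + x * y + y ^ 2 - x - y + 1 = 0 then (1 : ℤ) else 0)
          - (if x = y then (1 : ℤ) else 0)
            * (if x ^ 2 + x * y + y ^ 2 - x - y + 1 = 0 then (1 : ℤ) else 0) := by
    intro x y
    by_cases h1 : x = y <;> by_cases hq : x ^ 2 + x * y + y ^ 2 - x - y + 1 = 0 <;>
      simp [geq, h1, hq]
  rw [Finset.sum_congr rfl fun x _ => Finset.sum_congr rfl fun y _ => ifsplit x y]
  simp only [Finset.sum_add_distrib, Finset.sum_sub_distrib]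
  have sum1 : ∑ x : ZMod p, ∑ y : ZMod p, (if x = y then (1 : ℤ) else 0) = (p : ℤ) := by
    have inner : ∀ x : ZMod p, ∑ y : ZMod p, (if x = y then (1 : ℤ) else 0) = 1 := by
      intro x; simp
    rw [Finset.sum_congr rfl fun x _ => inner x]
    simp [hcard]
  have sum2 : ∑ x : ZMod p, ∑ y : ZMod p,
      (if x ^ 2 + x * y + y ^ 2 - x - y + 1 = 0 then (1 : ℤ) else 0)
      = (p : ℤ) - χ (-3) := by
    have inner : ∀ x : ZMod p, ∑ y : ZMod p,
        (if x ^ 2 + x * y + y ^ 2 - x - y + 1 = 0 then (1 : ℤ) else 0)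
        = 1 + χ ((x - 1) ^ 2 - 4 * (x ^ 2 - x + 1)) := by
      intro x
      have e : ∀ y : ZMod p, (x ^ 2 + x * y + y ^ 2 - x - y + 1 = 0)
          ↔ (y ^ 2 + (x - 1) * y + (x ^ 2 - x + 1) = 0) := by
        intro y
        constructor
        · intro h; rw [← h]; ring
        · intro h; rw [← h]; ring
      rw [Finset.sum_congr rfl fun y _ => if_congr (e y) rfl rfl]
      exact lemA hp (x - 1) (x ^ 2 - x + 1)
    rw [Finset.sum_congr rfl fun x _ => inner x, Finset.sum_add_distrib]
    have e2 : ∀ x : ZMod p, (x - 1) ^ 2 - 4 * (x ^ 2 - x + 1)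
        = (-3) * x ^ 2 + 2 * x + (-3) := by intro x; ring
    rw [Finset.sum_congr rfl fun x _ => congrArg χ (e2 x),
      lemB hp (neg_ne_zero.mpr h3) 2 (-3)]
    have hd : ((2 : ZMod p) ^ 2 - 4 * (-3) * (-3)) = -(2 ^ 5) := by ring
    have hd0 : ((2 : ZMod p) ^ 2 - 4 * (-3) * (-3)) ≠ 0 := by
      rw [hd]; exact neg_ne_zero.mpr (pow_ne_zero 5 h2)
    rw [if_neg hd0, Finset.sum_const, Finset.card_univ, hcard, nsmul_eq_mul, mul_one]
    ring
  have sum3 : ∑ x : ZMod p, ∑ y : ZMod p,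
      ((if x = y then (1 : ℤ) else 0)
        * (if x ^ 2 + x * y + y ^ 2 - x - y + 1 = 0 then (1 : ℤ) else 0))
      = 1 + χ (-2) := by
    have inner : ∀ x : ZMod p, ∑ y : ZMod p,
        ((if x = y then (1 : ℤ) else 0)
          * (if x ^ 2 + x * y + y ^ 2 - x - y + 1 = 0 then (1 : ℤ) else 0))
        = (if x ^ 2 + x * x + x ^ 2 - x - x + 1 = 0 then (1 : ℤ) else 0) := by
      intro x
      rw [Finset.sum_eq_single x]
      · simp
      · intro y _ hy; simp [Ne.symm hy]
      · simp
    rw [Finset.sum_congr rfl fun x _ => inner x]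
    have cond3 : ∀ x : ZMod p, (x ^ 2 + x * x + x ^ 2 - x - x + 1 = 0)
        ↔ (x ^ 2 + (-(2 * 3⁻¹)) * x + 3⁻¹ = 0) := by
      intro x
      have key : x ^ 2 + (-(2 * 3⁻¹)) * x + 3⁻¹
          = 3⁻¹ * (x ^ 2 + x * x + x ^ 2 - x - x + 1) := by
        field_simp
        ring
      rw [key, mul_eq_zero]
      simp [inv_ne_zero h3]
    rw [Finset.sum_congr rfl fun x _ => if_congr (cond3 x) rfl rfl, lemA hp _ _]
    have e3 : ((-(2 * 3⁻¹)) ^ 2 - 4 * 3⁻¹ : ZMod p) = (-2) * (2 * 3⁻¹) ^ 2 := by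
      field_simp
      ring
    rw [e3, map_mul, quadraticChar_sq_one' (mul_ne_zero h2 (inv_ne_zero h3)), mul_one]
  rw [sum1, sum2, sum3]

end CountLemma

section MainSum
variable {p : ℕ} [Fact p.Prime]

private lemma main_sum (hp : 5 ≤ p) :
    ∑ t : ZMod p,
        (∑ x : ZMod p, quadraticChar (ZMod p)
          (x ^ 3 - t * x ^ 2 + x * t ^ 2 - t ^ 2)) ^ 2
      = (p : ℤ) ^ 2 - (p : ℤ) - (p : ℤ) * quadraticChar (ZMod p) (-3)
          - (p : ℤ) * quadraticChar (ZMod p) (-2)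
          - (∑ x : ZMod p, quadraticChar (ZMod p) (x ^ 3 - x ^ 2 + x)) ^ 2 := by
  set χ := quadraticChar (ZMod p) with hχ
  have hcard : Fintype.card (ZMod p) = p := ZMod.card p
  -- split off t = 0
  have split := Finset.add_sum_erase Finset.univ
    (fun t : ZMod p =>
      (∑ x : ZMod p, χ (x ^ 3 - t * x ^ 2 + x * t ^ 2 - t ^ 2)) ^ 2)
    (Finset.mem_univ (0 : ZMod p))
  have split' : (∑ x : ZMod p, χ (x ^ 3 - (0:ZMod p) * x ^ 2 + x * (0:ZMod p) ^ 2 - (0:ZMod p) ^ 2)) ^ 2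
      + ∑ t ∈ Finset.univ.erase (0 : ZMod p),
          (∑ x : ZMod p, χ (x ^ 3 - t * x ^ 2 + x * t ^ 2 - t ^ 2)) ^ 2
      = ∑ t : ZMod p,
          (∑ x : ZMod p, χ (x ^ 3 - t * x ^ 2 + x * t ^ 2 - t ^ 2)) ^ 2 := split
  rw [← split', step_t0 hp]
  -- rewrite each term for t ≠ 0
  have hterm : ∀ t ∈ Finset.univ.erase (0 : ZMod p),
      (∑ x : ZMod p, χ (x ^ 3 - t * x ^ 2 + x * t ^ 2 - t ^ 2)) ^ 2
        = ∑ x : ZMod p, ∑ y : ZMod p,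
            χ ((t * (x ^ 3 - x ^ 2 + x) - 1) * (t * (y ^ 3 - y ^ 2 + y) - 1)) := by
    intro t ht
    rw [step_sub hp (Finset.ne_of_mem_erase ht), pow_two, Finset.sum_mul_sum]
    exact Finset.sum_congr rfl fun x _ => Finset.sum_congr rfl fun y _ =>
      (map_mul χ _ _).symm
  rw [Finset.sum_congr rfl hterm]
  -- swap the t-sum inside
  rw [Finset.sum_comm]
  rw [Finset.sum_congr rfl fun x (_ : x ∈ Finset.univ) => Finset.sum_comm]
  -- evaluate inner t-sums
  rw [Finset.sum_congr rfl fun x (_ : x ∈ Finset.univ) =>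
    Finset.sum_congr rfl fun y (_ : y ∈ Finset.univ) =>
      inner_t hp (x ^ 3 - x ^ 2 + x) (y ^ 3 - y ^ 2 + y)]
  simp only [Finset.sum_sub_distrib]
  -- term 1
  have t1 : ∑ x : ZMod p, ∑ y : ZMod p,
      (if (x ^ 3 - x ^ 2 + x) = (y ^ 3 - y ^ 2 + y) then (p : ℤ) else 0)
      = (p : ℤ) * ((p : ℤ) + ((p : ℤ) - χ (-3)) - (1 + χ (-2))) := by
    have e : ∀ x y : ZMod p,
        (if (x ^ 3 - x ^ 2 + x) = (y ^ 3 - y ^ 2 + y) then (p : ℤ) else 0)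
        = (p : ℤ) * (if (x ^ 3 - x ^ 2 + x) = (y ^ 3 - y ^ 2 + y) then (1 : ℤ) else 0) := by
      intro x y; split <;> simp
    rw [Finset.sum_congr rfl fun x _ => Finset.sum_congr rfl fun y _ => e x y]
    rw [Finset.sum_congr rfl fun x (_ : x ∈ Finset.univ) => (Finset.mul_sum _ _ _).symm,
      ← Finset.mul_sum, count_eq hp]
  -- term 2
  have t2 : ∑ x : ZMod p, ∑ y : ZMod p,
      χ (x ^ 3 - x ^ 2 + x) * χ (y ^ 3 - y ^ 2 + y)
      = (∑ x : ZMod p, χ (x ^ 3 - x ^ 2 + x)) ^ 2 := by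
    rw [pow_two, Finset.sum_mul_sum]
  -- term 3
  have t3 : ∑ _x : ZMod p, ∑ _y : ZMod p, (1 : ℤ) = (p : ℤ) * (p : ℤ) := by
    simp [Finset.sum_const, hcard, mul_one]
  rw [t1, t2, t3]
  ring

end MainSum

/-- For a prime `p ≥ 5` and the family `y² = x³ - t x² + (x - 1) t²`,
the second-moment sum equals
`p² - 2p δ_{2,3}(p) - 2p χ(-3) - p χ(-2) - (∑_{x mod p} χ(x³ - x² + x))²`. -/
theorem second_moment_family_two (p : ℕ) [Fact p.Prime] (hp : 5 ≤ p) :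
    ∑ t : ZMod p,
      (-∑ x : ZMod p,
        legendreSym p ((x.val : ℤ) ^ 3 - (t.val : ℤ) * (x.val : ℤ) ^ 2
          + (x.val : ℤ) * (t.val : ℤ) ^ 2 - (t.val : ℤ) ^ 2)) ^ 2 =
      (p : ℤ) ^ 2 - 2 * (p : ℤ) * (if p % 3 = 2 then 1 else 0)
        - 2 * (p : ℤ) * legendreSym p (-3) - (p : ℤ) * legendreSym p (-2)
        - (∑ x : ZMod p,
            legendreSym p ((x.val : ℤ) ^ 3 - (x.val : ℤ) ^ 2 + (x.val : ℤ))) ^ 2 := by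
  have hpp : p.Prime := Fact.out
  haveI : NeZero p := ⟨by omega⟩
  set χ := quadraticChar (ZMod p) with hχ
  have lsym : ∀ a : ℤ, legendreSym p a = χ ((a : ZMod p)) := fun a => rfl
  have cast1 : ∀ x t : ZMod p,
      legendreSym p ((x.val : ℤ) ^ 3 - (t.val : ℤ) * (x.val : ℤ) ^ 2
          + (x.val : ℤ) * (t.val : ℤ) ^ 2 - (t.val : ℤ) ^ 2)
        = χ (x ^ 3 - t * x ^ 2 + x * t ^ 2 - t ^ 2) := by
    intro x t
    rw [lsym]
    congr 1
    push_cast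
    simp [ZMod.natCast_val, ZMod.cast_id]
  have cast2 : ∀ x : ZMod p,
      legendreSym p ((x.val : ℤ) ^ 3 - (x.val : ℤ) ^ 2 + (x.val : ℤ))
        = χ (x ^ 3 - x ^ 2 + x) := by
    intro x
    rw [lsym]
    congr 1
    push_cast
    simp [ZMod.natCast_val, ZMod.cast_id]
  have cast3 : legendreSym p (-3) = χ (-3) := by
    rw [lsym]; congr 1; push_cast; ring
  have cast4 : legendreSym p (-2) = χ (-2) := by
    rw [lsym]; congr 1; push_cast; ring
  simp only [cast1, cast2, cast3, cast4, neg_sq]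
  rw [main_sum hp]
  have h3 : legendreSym p (-3) = if p % 3 = 2 then -1 else 1 := leg_neg_three hp
  rw [cast3] at h3
  rcases Nat.lt_or_ge (p % 3) 2 with h | h
  · have hne : ¬ (p % 3 = 2) := by omega
    rw [if_neg hne] at h3 ⊢
    rw [h3]
    ring
  · have heq : p % 3 = 2 := by
      have := Nat.mod_lt p (show 0 < 3 by norm_num)
      omega
    rw [if_pos heq] at h3 ⊢
    rw [h3]
    ring
end

section
/- Let p > 3 be a prime. For the one-parameter family y² = x³ + t x² + t², the second-moment sum satisfies ∑_{t mod p} a_t(p)² = p² − 2p − χ(−3)·p − 1, where a_t(p) := −∑_{x mod p} χ(x³ + t x² + t²). -/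
open Finset

namespace SecondMomentAux

variable (p : ℕ) [Fact p.Prime]

noncomputable def qχ (a : ZMod p) : ℤ := quadraticChar (ZMod p) a

variable {p}

lemma hchar2 (hp : 3 < p) : ringChar (ZMod p) ≠ 2 := by
  rw [ZMod.ringChar_zmod_n]; omega

lemma qχ_mul (a b : ZMod p) : qχ p (a * b) = qχ p a * qχ p b := by
  simp [qχ, map_mul]

lemma qχ_zero : qχ p (0 : ZMod p) = 0 := by simp [qχ]

lemma qχ_one : qχ p (1 : ZMod p) = 1 := by simp [qχ]

lemma qχ_sq {a : ZMod p} (ha : a ≠ 0) : qχ p a ^ 2 = 1 := by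
  have h := quadraticChar_sq_one (F := ZMod p) ha
  unfold qχ
  exact_mod_cast h

lemma qχ_sq' {a : ZMod p} (ha : a ≠ 0) : qχ p (a ^ 2) = 1 := by
  have := quadraticChar_sq_one' (F := ZMod p) ha
  simp [qχ, this]

lemma qχ_sum (hp : 3 < p) : ∑ a : ZMod p, qχ p a = 0 := by
  have h := quadraticChar_sum_zero (hchar2 hp)
  unfold qχ
  exact_mod_cast h

-- affine sums of the quadratic character vanish
lemma sum_affine (hp : 3 < p) {c : ZMod p} (hc : c ≠ 0) (d : ZMod p) :
    ∑ t : ZMod p, qχ p (c * t + d) = 0 := by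
  have hbij : Function.Bijective (fun t : ZMod p => c * t + d) := by
    have : (fun t : ZMod p => c * t + d) =
        (Equiv.addRight d) ∘ (Equiv.mulLeft₀ c hc) := rfl
    rw [this]
    exact (Equiv.addRight d).bijective.comp (Equiv.mulLeft₀ c hc).bijective
  calc ∑ t : ZMod p, qχ p (c * t + d)
      = ∑ t : ZMod p, qχ p t := Fintype.sum_bijective _ hbij _ _ (fun t => rfl)
    _ = 0 := qχ_sum hp

-- the core lemma: ∑ χ(t(t+c)) = -1 for c ≠ 0
lemma sum_mul_shift (hp : 3 < p) {c : ZMod p} (hc : c ≠ 0) :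
    ∑ t : ZMod p, qχ p (t * (t + c)) = -1 := by
  have h1 : ∀ t : ZMod p, t ≠ 0 → qχ p (t * (t + c)) = qχ p (1 + c * t⁻¹) := by
    intro t ht
    have : t * (t + c) = t ^ 2 * (1 + c * t⁻¹) := by
      field_simp
    rw [this, qχ_mul, qχ_sq' ht, one_mul]
  have h2 : ∑ t : ZMod p, qχ p (t * (t + c)) =
      ∑ t ∈ univ.erase (0 : ZMod p), qχ p (1 + c * t⁻¹) := by
    rw [← Finset.sum_erase (f := fun t : ZMod p => qχ p (t * (t + c))) (a := 0) univ
      (by simp [qχ_zero])]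
    exact Finset.sum_congr rfl fun t ht => h1 t (Finset.ne_of_mem_erase ht)
  have h3 : ∑ t ∈ univ.erase (0 : ZMod p), qχ p (1 + c * t⁻¹) =
      ∑ s ∈ univ.erase (0 : ZMod p), qχ p (1 + c * s) := by
    apply Finset.sum_nbij' (i := fun t => t⁻¹) (j := fun s => s⁻¹)
    · intro a ha
      simp only [Finset.mem_erase, Finset.mem_univ, and_true] at ha ⊢
      exact inv_ne_zero ha
    · intro a ha
      simp only [Finset.mem_erase, Finset.mem_univ, and_true] at ha ⊢
      exact inv_ne_zero ha
    · intro a ha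
      simp only [Finset.mem_erase, Finset.mem_univ, and_true] at ha
      exact inv_inv a
    · intro a ha
      simp only [Finset.mem_erase, Finset.mem_univ, and_true] at ha
      exact inv_inv a
    · intro a ha; rfl
  have h4 : ∑ s ∈ univ.erase (0 : ZMod p), qχ p (1 + c * s) =
      (∑ s : ZMod p, qχ p (c * s + 1)) - qχ p 1 := by
    rw [← Finset.sum_erase_add univ _ (Finset.mem_univ (0 : ZMod p))]
    simp only [mul_zero, add_zero, zero_add]
    have : ∀ s : ZMod p, qχ p (1 + c * s) = qχ p (c * s + 1) := fun s => by
      rw [add_comm]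
    rw [Finset.sum_congr rfl fun s _ => this s]
    ring
  rw [h2, h3, h4, sum_affine hp hc, qχ_one]; ring

-- T lemma: key evaluation of ∑ χ((1+ta)(1+tb))
lemma sum_T (hp : 3 < p) (a b : ZMod p) :
    ∑ t : ZMod p, qχ p ((1 + t * a) * (1 + t * b)) =
      (if a = b then (p : ℤ) else 0) - qχ p a * qχ p b := by
  by_cases hab : a = b
  · subst hab
    simp only [if_pos rfl]
    by_cases ha : a = 0
    · subst ha
      simp [qχ_zero, qχ_one, Finset.card_univ, ZMod.card]
    · have key : ∀ t : ZMod p, qχ p ((1 + t * a) * (1 + t * a)) =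
          1 - (if t = -a⁻¹ then 1 else 0) := by
        intro t
        by_cases h : 1 + t * a = 0
        · have ht : t = -a⁻¹ := by
            have : t * a = -1 := by linear_combination h
            field_simp [eq_div_iff ha] at this ⊢
            linear_combination this
          rw [ht] at h ⊢
          rw [h]
          simp [qχ_zero]
        · have ht : t ≠ -a⁻¹ := by
            intro hh; subst hh; apply h
            field_simp; ring
          rw [← sq, qχ_sq' h]
          simp [ht]
      rw [Finset.sum_congr rfl fun t _ => key t, Finset.sum_sub_distrib]
      have := qχ_sq ha
      simp only [Finset.sum_const, Finset.card_univ, ZMod.card, nsmul_eq_mul, mul_one,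
        Finset.sum_ite_eq', Finset.mem_univ, if_pos]
      nlinarith [this]
  · rw [if_neg hab]
    by_cases ha : a = 0
    · subst ha
      have hb : b ≠ 0 := fun h => hab h.symm
      simp only [mul_zero, add_zero, one_mul, qχ_zero, zero_mul, zero_sub]
      have : ∀ t : ZMod p, qχ p (1 + t * b) = qχ p (b * t + 1) := fun t => by
        rw [add_comm, mul_comm]
      rw [Finset.sum_congr rfl fun t _ => this t, sum_affine hp hb]
      ring
    · by_cases hb : b = 0
      · subst hb
        simp only [mul_zero, add_zero, mul_one, qχ_zero, mul_zero, sub_zero]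
        have h5 : ∀ t : ZMod p, qχ p (1 + t * a) = qχ p (a * t + 1) := fun t => by
          rw [add_comm, mul_comm]
        calc ∑ t : ZMod p, qχ p (1 + t * a) = ∑ t : ZMod p, qχ p (a * t + 1) :=
              Finset.sum_congr rfl fun t _ => h5 t
          _ = 0 := sum_affine hp ha 1
      · -- both nonzero, a ≠ b
        have key : ∀ t : ZMod p, qχ p ((1 + t * a) * (1 + t * b)) =
            qχ p a * qχ p b * qχ p ((t + a⁻¹) * ((t + a⁻¹) + (b⁻¹ - a⁻¹))) := by
          intro t
          rw [← qχ_mul, ← qχ_mul]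
          congr 1
          field_simp
          ring
        rw [Finset.sum_congr rfl fun t _ => key t, ← Finset.mul_sum]
        have hc : b⁻¹ - a⁻¹ ≠ 0 := by
          intro h
          apply hab
          have : b⁻¹ = a⁻¹ := by linear_combination h
          exact (inv_injective this).symm
        have hshift : ∑ t : ZMod p, qχ p ((t + a⁻¹) * ((t + a⁻¹) + (b⁻¹ - a⁻¹))) =
            ∑ s : ZMod p, qχ p (s * (s + (b⁻¹ - a⁻¹))) :=
          Fintype.sum_bijective (fun t : ZMod p => t + a⁻¹)
            (Equiv.addRight a⁻¹).bijective _ _ (fun t => rfl)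
        rw [hshift, sum_mul_shift hp hc]
        ring

-- A = ∑ χ(u²(u+1)) = -1
lemma sum_A (hp : 3 < p) : ∑ u : ZMod p, qχ p (u ^ 2 * (u + 1)) = -1 := by
  have h1 : ∀ u : ZMod p, u ≠ 0 → qχ p (u ^ 2 * (u + 1)) = qχ p (u + 1) := by
    intro u hu
    rw [qχ_mul, qχ_sq' hu, one_mul]
  have h2 : ∑ u : ZMod p, qχ p (u ^ 2 * (u + 1)) =
      ∑ u ∈ univ.erase (0 : ZMod p), qχ p (u + 1) := by
    rw [← Finset.sum_erase (f := fun u : ZMod p => qχ p (u ^ 2 * (u + 1))) (a := 0) univ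
      (by simp [qχ_zero])]
    exact Finset.sum_congr rfl fun u hu => h1 u (Finset.ne_of_mem_erase hu)
  have h3 : ∑ u ∈ univ.erase (0 : ZMod p), qχ p (u + 1) =
      (∑ u : ZMod p, qχ p (1 * u + 1)) - qχ p 1 := by
    rw [← Finset.sum_erase_add univ _ (Finset.mem_univ (0 : ZMod p))]
    simp only [zero_add, one_mul]
    ring
  rw [h2, h3, sum_affine hp one_ne_zero 1, qχ_one]
  ring

-- number of roots of a monic quadratic
lemma sum_quadratic_roots (hp : 3 < p) (B C : ZMod p) :
    ∑ v : ZMod p, (if v ^ 2 + B * v + C = 0 then (1 : ℤ) else 0) =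
      1 + qχ p (B ^ 2 - 4 * C) := by
  have h2 : (2 : ZMod p) ≠ 0 := by
    have := (Fact.out : p.Prime)
    intro h
    have h4 : ((2 : ℕ) : ZMod p) = 0 := by exact_mod_cast h
    rw [ZMod.natCast_eq_zero_iff] at h4
    have := Nat.le_of_dvd (by norm_num) h4
    omega
  have key : ∀ v : ZMod p, (v ^ 2 + B * v + C = 0) ↔ ((2 * v + B) ^ 2 = B ^ 2 - 4 * C) := by
    intro v
    constructor
    · intro h; linear_combination 4 * h
    · intro h
      have h4 : (4 : ZMod p) ≠ 0 := by
        intro hh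
        apply h2
        have : (4 : ZMod p) = 2 * 2 := by norm_num
        rw [this] at hh
        rcases mul_eq_zero.mp hh with h | h <;> exact h
      have : (4 : ZMod p) * (v ^ 2 + B * v + C) = 0 := by linear_combination h
      rcases mul_eq_zero.mp this with h | h
      · exact absurd h h4
      · exact h
  have hbij : Function.Bijective (fun v : ZMod p => 2 * v + B) := by
    have : (fun v : ZMod p => 2 * v + B) =
        (Equiv.addRight B) ∘ (Equiv.mulLeft₀ (2 : ZMod p) h2) := rfl
    rw [this]
    exact (Equiv.addRight B).bijective.comp (Equiv.mulLeft₀ (2 : ZMod p) h2).bijective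
  calc ∑ v : ZMod p, (if v ^ 2 + B * v + C = 0 then (1 : ℤ) else 0)
      = ∑ v : ZMod p, (if (2 * v + B) ^ 2 = B ^ 2 - 4 * C then (1 : ℤ) else 0) :=
        Finset.sum_congr rfl fun v _ => by simp only [key v]
    _ = ∑ w : ZMod p, (if w ^ 2 = B ^ 2 - 4 * C then (1 : ℤ) else 0) :=
        Fintype.sum_bijective _ hbij _ _ (fun v => rfl)
    _ = ((univ.filter fun w : ZMod p => w ^ 2 = B ^ 2 - 4 * C).card : ℤ) := by
        rw [Finset.sum_boole]
    _ = 1 + qχ p (B ^ 2 - 4 * C) := by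
        have h := quadraticChar_card_sqrts (hchar2 hp) (B ^ 2 - 4 * C)
        have hset : {x : ZMod p | x ^ 2 = B ^ 2 - 4 * C}.toFinset =
            univ.filter fun w : ZMod p => w ^ 2 = B ^ 2 - 4 * C := by
          ext x; simp
        rw [hset] at h
        rw [h]
        unfold qχ
        ring

lemma natCast_ne_zero (hp : 3 < p) {n : ℕ} (h0 : 0 < n) (hn : n < p) : (n : ZMod p) ≠ 0 := by
  intro h
  rw [ZMod.natCast_eq_zero_iff] at h
  have := Nat.le_of_dvd h0 h
  omega

lemma two_ne_zero' (hp : 3 < p) : (2 : ZMod p) ≠ 0 := by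
  have := natCast_ne_zero hp (n := 2) (by norm_num) (by omega)
  exact_mod_cast this

lemma three_ne_zero' (hp : 3 < p) : (3 : ZMod p) ≠ 0 := by
  have := natCast_ne_zero hp (n := 3) (by norm_num) (by omega)
  exact_mod_cast this

lemma four_ne_zero' (hp : 3 < p) : (4 : ZMod p) ≠ 0 := by
  intro h
  have : (4 : ZMod p) = 2 * 2 := by norm_num
  rw [this] at h
  rcases mul_eq_zero.mp h with h | h <;> exact two_ne_zero' hp h

-- the count N' = ∑∑ [g u = g v] = 2p - 2 - χ(-3)
lemma sum_N (hp : 3 < p) :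
    ∑ u : ZMod p, ∑ v : ZMod p,
      (if u ^ 2 * (u + 1) = v ^ 2 * (v + 1) then (1 : ℤ) else 0) =
      2 * (p : ℤ) - 2 - qχ p (-3) := by
  have h3 : (3 : ZMod p) ≠ 0 := three_ne_zero' hp
  -- rewrite the condition
  have hcond : ∀ u v : ZMod p, (u ^ 2 * (u + 1) = v ^ 2 * (v + 1)) ↔
      (u = v ∨ v ^ 2 + (u + 1) * v + (u ^ 2 + u) = 0) := by
    intro u v
    rw [← sub_eq_zero (a := u ^ 2 * (u + 1)), show u ^ 2 * (u + 1) - v ^ 2 * (v + 1) =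
      (u - v) * (v ^ 2 + (u + 1) * v + (u ^ 2 + u)) from by ring, mul_eq_zero,
      sub_eq_zero]
  have hsplit : ∀ u v : ZMod p,
      (if u ^ 2 * (u + 1) = v ^ 2 * (v + 1) then (1 : ℤ) else 0) =
      (if u = v then (1 : ℤ) else 0) +
      (if v ^ 2 + (u + 1) * v + (u ^ 2 + u) = 0 then (1 : ℤ) else 0) -
      (if u = v then (1 : ℤ) else 0) *
      (if v ^ 2 + (u + 1) * v + (u ^ 2 + u) = 0 then (1 : ℤ) else 0) := by
    intro u v
    rw [show (if u ^ 2 * (u + 1) = v ^ 2 * (v + 1) then (1 : ℤ) else 0) =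
      (if (u = v ∨ v ^ 2 + (u + 1) * v + (u ^ 2 + u) = 0) then (1 : ℤ) else 0) from by
        simp only [hcond u v]]
    by_cases h1 : u = v <;> by_cases h2 : v ^ 2 + (u + 1) * v + (u ^ 2 + u) = 0 <;>
      simp [h1, h2]
  -- sum of the diagonal part
  have hS1 : ∑ u : ZMod p, ∑ v : ZMod p, (if u = v then (1 : ℤ) else 0) = p := by
    simp [Finset.sum_ite_eq, Finset.card_univ, ZMod.card]
  -- sum of the conic part
  have hS2 : ∑ u : ZMod p, ∑ v : ZMod p,
      (if v ^ 2 + (u + 1) * v + (u ^ 2 + u) = 0 then (1 : ℤ) else 0) =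
      (p : ℤ) - qχ p (-3) := by
    have hinner : ∀ u : ZMod p, ∑ v : ZMod p,
        (if v ^ 2 + (u + 1) * v + (u ^ 2 + u) = 0 then (1 : ℤ) else 0) =
        1 + qχ p ((u + 1) ^ 2 - 4 * (u ^ 2 + u)) := fun u =>
      sum_quadratic_roots hp (u + 1) (u ^ 2 + u)
    rw [Finset.sum_congr rfl fun u _ => hinner u, Finset.sum_add_distrib]
    have hfac : ∀ u : ZMod p, (u + 1) ^ 2 - 4 * (u ^ 2 + u) =
        (-3) * ((u + 1) * ((u + 1) + (-(3 : ZMod p)⁻¹ - 1))) := by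
      intro u
      field_simp
      ring
    have hc : (-(3 : ZMod p)⁻¹ - 1) ≠ 0 := by
      intro h
      have h4 : (4 : ZMod p) = 0 := by
        have h31 : (3 : ZMod p) * (3 : ZMod p)⁻¹ = 1 := mul_inv_cancel₀ h3
        linear_combination (-3 : ZMod p) * h - h31
      exact four_ne_zero' hp h4
    have : ∑ u : ZMod p, qχ p ((u + 1) ^ 2 - 4 * (u ^ 2 + u)) =
        qχ p (-3) * ∑ u : ZMod p, qχ p ((u + 1) * ((u + 1) + (-(3 : ZMod p)⁻¹ - 1))) := by
      rw [Finset.mul_sum]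
      exact Finset.sum_congr rfl fun u _ => by rw [hfac u, qχ_mul]
    rw [this]
    have hshift : ∑ u : ZMod p, qχ p ((u + 1) * ((u + 1) + (-(3 : ZMod p)⁻¹ - 1))) =
        ∑ s : ZMod p, qχ p (s * (s + (-(3 : ZMod p)⁻¹ - 1))) :=
      Fintype.sum_bijective (fun u : ZMod p => u + 1)
        (Equiv.addRight (1 : ZMod p)).bijective _ _ (fun u => rfl)
    rw [hshift, sum_mul_shift hp hc]
    simp [Finset.card_univ, ZMod.card]
    ring
  -- sum of the overlap part
  have hS3 : ∑ u : ZMod p, ∑ v : ZMod p,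
      ((if u = v then (1 : ℤ) else 0) *
       (if v ^ 2 + (u + 1) * v + (u ^ 2 + u) = 0 then (1 : ℤ) else 0)) = 2 := by
    have hinner : ∀ u : ZMod p, ∑ v : ZMod p,
        ((if u = v then (1 : ℤ) else 0) *
         (if v ^ 2 + (u + 1) * v + (u ^ 2 + u) = 0 then (1 : ℤ) else 0)) =
        (if u ^ 2 + (u + 1) * u + (u ^ 2 + u) = 0 then (1 : ℤ) else 0) := by
      intro u
      rw [Finset.sum_eq_single u]
      · simp
      · intro v _ hv
        simp [Ne.symm hv]
      · intro h
        exact absurd (Finset.mem_univ u) h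
    rw [Finset.sum_congr rfl fun u _ => hinner u]
    set c : ZMod p := -(2 * (3 : ZMod p)⁻¹) with hcdef
    have hcond2 : ∀ u : ZMod p, (u ^ 2 + (u + 1) * u + (u ^ 2 + u) = 0) ↔
        (u = 0 ∨ u = c) := by
      intro u
      have h31 : (3 : ZMod p) * (3 : ZMod p)⁻¹ = 1 := mul_inv_cancel₀ h3
      constructor
      · intro h
        have : u * (3 * u + 2) = 0 := by linear_combination h
        rcases mul_eq_zero.mp this with h' | h'
        · exact Or.inl h'
        · right
          rw [hcdef]
          have : (3:ZMod p)⁻¹ * (3 * u + 2) = 0 := by rw [h']; ring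
          linear_combination this - u * h31
      · rintro (h | h)
        · rw [h]; ring
        · rw [h, hcdef]
          field_simp
          ring
    have hne : (0 : ZMod p) ≠ c := by
      intro h
      have : (2 : ZMod p) * (3 : ZMod p)⁻¹ = 0 := by rw [hcdef] at h; linear_combination h
      rcases mul_eq_zero.mp this with h' | h'
      · exact two_ne_zero' hp h'
      · exact h3 (by
          have h31 : (3 : ZMod p) * (3 : ZMod p)⁻¹ = 1 := mul_inv_cancel₀ h3
          rw [h'] at h31
          simpa using h31.symm)
    have hpt : ∀ u : ZMod p, (if u ^ 2 + (u + 1) * u + (u ^ 2 + u) = 0 then (1 : ℤ) else 0) =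
        (if u = 0 then (1 : ℤ) else 0) + (if u = c then (1 : ℤ) else 0) := by
      intro u
      rw [show (if u ^ 2 + (u + 1) * u + (u ^ 2 + u) = 0 then (1 : ℤ) else 0) =
        (if (u = 0 ∨ u = c) then (1 : ℤ) else 0) from by simp only [hcond2 u]]
      by_cases h1 : u = 0 <;> by_cases h2 : u = c
      · exact absurd (h1 ▸ h2) hne
      all_goals simp [h1, h2, hne, Ne.symm hne]
    rw [Finset.sum_congr rfl fun u _ => hpt u, Finset.sum_add_distrib]
    simp
  rw [Finset.sum_congr rfl fun u _ => Finset.sum_congr rfl fun v _ => hsplit u v]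
  simp only [Finset.sum_sub_distrib, Finset.sum_add_distrib]
  rw [hS1, hS2, hS3]
  ring

lemma sum_cubes (hp : 3 < p) : ∑ x : ZMod p, qχ p (x ^ 3) = 0 := by
  have h1 : ∀ x : ZMod p, x ≠ 0 → qχ p (x ^ 3) = qχ p x := by
    intro x hx
    rw [show x ^ 3 = x ^ 2 * x from by ring, qχ_mul, qχ_sq' hx, one_mul]
  have h2 : ∑ x : ZMod p, qχ p (x ^ 3) = ∑ x ∈ univ.erase (0 : ZMod p), qχ p x := by
    rw [← Finset.sum_erase (f := fun x : ZMod p => qχ p (x ^ 3)) (a := 0) univ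
      (by simp [qχ_zero])]
    exact Finset.sum_congr rfl fun x hx => h1 x (Finset.ne_of_mem_erase hx)
  rw [h2, Finset.sum_erase (f := fun x : ZMod p => qχ p x) (a := 0) univ qχ_zero,
    qχ_sum hp]

end SecondMomentAux

open SecondMomentAux Finset in
/-- For a prime `p > 3` and the family `y² = x³ + t x² + t²`, the
second-moment sum equals `p² - 2p - χ(-3) p - 1`. -/
theorem second_moment_family_three (p : ℕ) [Fact p.Prime] (hp : 3 < p) :
    ∑ t : ZMod p,
      (-∑ x : ZMod p,
        legendreSym p ((x.val : ℤ) ^ 3 + (t.val : ℤ) * (x.val : ℤ) ^ 2 + (t.val : ℤ) ^ 2)) ^ 2 =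
      (p : ℤ) ^ 2 - 2 * (p : ℤ) - legendreSym p (-3) * (p : ℤ) - 1 := by
  have hp0 : p ≠ 0 := by omega
  haveI : NeZero p := ⟨hp0⟩
  -- rewrite the Legendre symbols as quadratic characters of ZMod p elements
  have hleg : ∀ t x : ZMod p,
      legendreSym p ((x.val : ℤ) ^ 3 + (t.val : ℤ) * (x.val : ℤ) ^ 2 + (t.val : ℤ) ^ 2) =
      qχ p (x ^ 3 + t * x ^ 2 + t ^ 2) := by
    intro t x
    rw [legendreSym]
    unfold qχ
    congr 1
    push_cast
    simp [ZMod.natCast_val, ZMod.cast_id]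
  have hleg3 : legendreSym p (-3) = qχ p (-3) := by
    rw [legendreSym]
    unfold qχ
    congr 1
    push_cast
    ring
  simp only [Finset.sum_congr rfl fun t (_ : t ∈ univ) => congrArg (fun z : ℤ => (-z) ^ 2)
    (Finset.sum_congr rfl fun x (_ : x ∈ univ) => hleg t x)]
  -- the t = 0 term vanishes
  have hzero : (-∑ x : ZMod p, qχ p (x ^ 3 + 0 * x ^ 2 + 0 ^ 2)) ^ 2 = 0 := by
    have : ∀ x : ZMod p, x ^ 3 + 0 * x ^ 2 + 0 ^ 2 = x ^ 3 := fun x => by ring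
    rw [Finset.sum_congr rfl fun x _ => congrArg (qχ p) (this x), sum_cubes hp]
    ring
  rw [← Finset.sum_erase_add univ _ (Finset.mem_univ (0 : ZMod p)), hzero, add_zero]
  -- for t ≠ 0 substitute x = t * u
  have hsub : ∀ t : ZMod p, t ≠ 0 →
      ∑ x : ZMod p, qχ p (x ^ 3 + t * x ^ 2 + t ^ 2) =
      ∑ u : ZMod p, qχ p (1 + t * (u ^ 2 * (u + 1))) := by
    intro t ht
    rw [← Fintype.sum_bijective (fun u : ZMod p => t * u)
      (Equiv.mulLeft₀ t ht).bijective _ _ (fun u => rfl)]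
    refine Finset.sum_congr rfl fun u _ => ?_
    rw [show (t * u) ^ 3 + t * (t * u) ^ 2 + t ^ 2 =
      t ^ 2 * (1 + t * (u ^ 2 * (u + 1))) from by ring, qχ_mul, qχ_sq' ht, one_mul]
  have hsq : ∀ t : ZMod p, t ≠ 0 →
      (-∑ x : ZMod p, qχ p (x ^ 3 + t * x ^ 2 + t ^ 2)) ^ 2 =
      ∑ u : ZMod p, ∑ v : ZMod p,
        qχ p ((1 + t * (u ^ 2 * (u + 1))) * (1 + t * (v ^ 2 * (v + 1)))) := by
    intro t ht
    rw [hsub t ht, neg_sq, sq, Finset.sum_mul_sum]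
    exact Finset.sum_congr rfl fun u _ => Finset.sum_congr rfl fun v _ => (qχ_mul _ _).symm
  rw [Finset.sum_congr rfl fun t ht => hsq t (Finset.ne_of_mem_erase ht)]
  -- swap the order of summation
  rw [Finset.sum_comm]
  have hswap : ∀ u : ZMod p, ∑ t ∈ univ.erase (0 : ZMod p), ∑ v : ZMod p,
      qχ p ((1 + t * (u ^ 2 * (u + 1))) * (1 + t * (v ^ 2 * (v + 1)))) =
      ∑ v : ZMod p, ∑ t ∈ univ.erase (0 : ZMod p),
      qχ p ((1 + t * (u ^ 2 * (u + 1))) * (1 + t * (v ^ 2 * (v + 1)))) := fun u =>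
    Finset.sum_comm
  rw [Finset.sum_congr rfl fun u _ => hswap u]
  -- evaluate the inner sum over t
  have hT : ∀ u v : ZMod p, ∑ t ∈ univ.erase (0 : ZMod p),
      qχ p ((1 + t * (u ^ 2 * (u + 1))) * (1 + t * (v ^ 2 * (v + 1)))) =
      (if u ^ 2 * (u + 1) = v ^ 2 * (v + 1) then (p : ℤ) else 0) -
        qχ p (u ^ 2 * (u + 1)) * qχ p (v ^ 2 * (v + 1)) - 1 := by
    intro u v
    have h0 : (fun t : ZMod p =>
        qχ p ((1 + t * (u ^ 2 * (u + 1))) * (1 + t * (v ^ 2 * (v + 1))))) 0 = 1 := by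
      simp [qχ_one]
    rw [eq_sub_iff_add_eq, ← h0, Finset.sum_erase_add univ _ (Finset.mem_univ 0)]
    exact sum_T hp _ _
  rw [Finset.sum_congr rfl fun u _ => Finset.sum_congr rfl fun v _ => hT u v]
  simp only [Finset.sum_sub_distrib]
  -- assemble the three pieces
  have hP1 : ∑ u : ZMod p, ∑ v : ZMod p,
      (if u ^ 2 * (u + 1) = v ^ 2 * (v + 1) then (p : ℤ) else 0) =
      (p : ℤ) * (2 * (p : ℤ) - 2 - qχ p (-3)) := by
    have : ∀ u v : ZMod p, (if u ^ 2 * (u + 1) = v ^ 2 * (v + 1) then (p : ℤ) else 0) =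
        (p : ℤ) * (if u ^ 2 * (u + 1) = v ^ 2 * (v + 1) then (1 : ℤ) else 0) := by
      intro u v; split <;> ring
    rw [Finset.sum_congr rfl fun u _ => Finset.sum_congr rfl fun v _ => this u v]
    simp only [← Finset.mul_sum]
    rw [sum_N hp]
  have hP2 : ∑ u : ZMod p, ∑ v : ZMod p,
      qχ p (u ^ 2 * (u + 1)) * qχ p (v ^ 2 * (v + 1)) = 1 := by
    rw [← Finset.sum_mul_sum, sum_A hp]
    ring
  have hP3 : ∑ u : ZMod p, ∑ v : ZMod p, (1 : ℤ) = (p : ℤ) ^ 2 := by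
    simp [Finset.card_univ, ZMod.card]
    ring
  rw [hP1, hP2, hP3, hleg3]
  ring
end

section
/- Let p > 3 be a prime. For the one-parameter family y² = x³ + t x² + t x + t², the first-moment sum satisfies ∑_{t mod p} a_t(p) = −p, where a_t(p) := −∑_{x mod p} χ(x³ + t x² + t x + t²). -/
section aux

variable {p : ℕ} [Fact p.Prime]

lemma two_ne_zero_zmod (hp : p ≠ 2) : (2 : ZMod p) ≠ 0 := by
  have : ringChar (ZMod p) ≠ 2 := by rw [ZMod.ringChar_zmod_n]; exact hp
  exact Ring.two_ne_zero this

/-- The units give a parametrization of the hyperbola `y² = t² - d` for `d ≠ 0`. -/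
noncomputable def hyperbolaEquiv (hp : p ≠ 2) (d : ZMod p) (hd : d ≠ 0) :
    (ZMod p)ˣ ≃ {ty : ZMod p × ZMod p // ty.2 ^ 2 = ty.1 ^ 2 - d} where
  toFun u := ⟨((((u : ZMod p) + d * (u : ZMod p)⁻¹) / 2),
      (((u : ZMod p) - d * (u : ZMod p)⁻¹) / 2)), by
    have hu : (u : ZMod p) ≠ 0 := u.ne_zero
    have h2 : (2 : ZMod p) ≠ 0 := two_ne_zero_zmod hp
    field_simp
    ring⟩
  invFun s := Units.mk0 (s.1.1 + s.1.2) (by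
    intro h0
    exact hd (by linear_combination (s.1.1 - s.1.2) * h0 + s.2))
  left_inv u := by
    have hu : (u : ZMod p) ≠ 0 := u.ne_zero
    have h2 : (2 : ZMod p) ≠ 0 := two_ne_zero_zmod hp
    ext
    simp only [Units.val_mk0]
    field_simp
    ring
  right_inv s := by
    obtain ⟨⟨t, y⟩, h⟩ := s
    have hne : t + y ≠ 0 := by
      intro h0
      exact hd (by linear_combination (t - y) * h0 + h)
    have h2 : (2 : ZMod p) ≠ 0 := two_ne_zero_zmod hp
    simp only [Subtype.mk_eq_mk, Units.val_mk0, Prod.mk.injEq]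
    constructor
    · field_simp
      linear_combination h
    · field_simp
      linear_combination -h

lemma sum_quadChar_sq_sub (hp : p ≠ 2) (d : ZMod p) (hd : d ≠ 0) :
    ∑ t : ZMod p, quadraticChar (ZMod p) (t ^ 2 - d) = -1 := by
  classical
  have hchar : ringChar (ZMod p) ≠ 2 := by rw [ZMod.ringChar_zmod_n]; exact hp
  have key : ∀ t : ZMod p,
      quadraticChar (ZMod p) (t ^ 2 - d)
        = (Fintype.card {y : ZMod p // y ^ 2 = t ^ 2 - d} : ℤ) - 1 := by
    intro t
    have h1 := quadraticChar_card_sqrts hchar (t ^ 2 - d)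
    rw [Set.toFinset_card] at h1
    have h2 : Fintype.card ({x : ZMod p | x ^ 2 = t ^ 2 - d} : Set (ZMod p))
        = Fintype.card {y : ZMod p // y ^ 2 = t ^ 2 - d} :=
      Fintype.card_congr (Equiv.subtypeEquivRight fun x => by simp [Set.mem_setOf_eq])
    rw [h2] at h1
    linarith
  calc ∑ t : ZMod p, quadraticChar (ZMod p) (t ^ 2 - d)
      = ∑ t : ZMod p, ((Fintype.card {y : ZMod p // y ^ 2 = t ^ 2 - d} : ℤ) - 1) := by
        exact Finset.sum_congr rfl fun t _ => key t
    _ = (∑ t : ZMod p, (Fintype.card {y : ZMod p // y ^ 2 = t ^ 2 - d} : ℤ)) - p := by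
        rw [Finset.sum_sub_distrib]
        simp [ZMod.card]
    _ = -1 := by
        have hcard : (∑ t : ZMod p, Fintype.card {y : ZMod p // y ^ 2 = t ^ 2 - d}) = p - 1 := by
          have e1 : {ty : ZMod p × ZMod p // ty.2 ^ 2 = ty.1 ^ 2 - d}
              ≃ Σ t : ZMod p, {y : ZMod p // y ^ 2 = t ^ 2 - d} :=
            Equiv.subtypeProdEquivSigmaSubtype fun t y => y ^ 2 = t ^ 2 - d
          have := Fintype.card_congr ((hyperbolaEquiv hp d hd).trans e1)
          rw [ZMod.card_units, Fintype.card_sigma] at this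
          omega
        have hp1 : 1 ≤ p := (Fact.out : p.Prime).one_lt.le
        rw [← Nat.cast_sum, hcard]
        omega
    
lemma sum_quadChar_sq (hp : p ≠ 2) :
    ∑ t : ZMod p, quadraticChar (ZMod p) (t ^ 2) = (p : ℤ) - 1 := by
  classical
  have : ∀ t : ZMod p, quadraticChar (ZMod p) (t ^ 2) = if t = 0 then 0 else 1 := by
    intro t
    by_cases h : t = 0
    · simp [h]
    · simp [h, quadraticChar_sq_one' h]
  rw [Finset.sum_congr rfl fun t _ => this t, Finset.sum_ite, Finset.sum_const,
    Finset.sum_const]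
  simp only [smul_zero, zero_add, nsmul_eq_mul, mul_one]
  rw [Finset.filter_ne', Finset.card_erase_of_mem (Finset.mem_univ 0), Finset.card_univ,
    ZMod.card]
  have hp1 : 1 ≤ p := (Fact.out : p.Prime).one_lt.le
  push_cast [Nat.cast_sub hp1]
  ring

lemma sum_quadChar_quadratic (hp : p ≠ 2) (b c : ZMod p) :
    ∑ t : ZMod p, quadraticChar (ZMod p) (t ^ 2 + b * t + c)
      = if b ^ 2 - 4 * c = 0 then (p : ℤ) - 1 else -1 := by
  have h2 : (2 : ZMod p) ≠ 0 := two_ne_zero_zmod hp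
  have h4 : (4 : ZMod p) ≠ 0 := by
    intro h
    apply h2
    have : (4 : ZMod p) = 2 * 2 := by norm_num
    rw [this] at h
    exact mul_self_eq_zero.mp h
  set d : ZMod p := (b ^ 2 - 4 * c) / 4 with hdd
  have hshift : ∀ t : ZMod p, (t - b / 2) ^ 2 + b * (t - b / 2) + c = t ^ 2 - d := by
    intro t
    rw [hdd]
    field_simp
    ring
  have hre : ∑ t : ZMod p, quadraticChar (ZMod p) (t ^ 2 + b * t + c)
      = ∑ t : ZMod p, quadraticChar (ZMod p) (t ^ 2 - d) := by
    rw [← Equiv.sum_comp (Equiv.subRight (b / 2))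
      (fun t => quadraticChar (ZMod p) (t ^ 2 + b * t + c))]
    exact Finset.sum_congr rfl fun t _ => by
      simp only [Equiv.subRight_apply]
      rw [hshift t]
  have hdzero : b ^ 2 - 4 * c = 0 ↔ d = 0 := by
    rw [hdd, div_eq_zero_iff]
    simp [h4]
  rw [hre]
  by_cases hd : d = 0
  · rw [if_pos (hdzero.mpr hd)]
    simp only [hd, sub_zero]
    exact sum_quadChar_sq hp
  · rw [if_neg (fun h => hd (hdzero.mp h))]
    exact sum_quadChar_sq_sub hp d hd

end aux

/-- For a prime `p > 3` and the family `y² = x³ + t x² + t x + t²`,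
the first-moment sum equals `-p`. -/
theorem first_moment_family_four (p : ℕ) [Fact p.Prime] (hp : 3 < p) :
    ∑ t : ZMod p,
      (-∑ x : ZMod p,
        legendreSym p ((x.val : ℤ) ^ 3 + (t.val : ℤ) * (x.val : ℤ) ^ 2
          + (t.val : ℤ) * (x.val : ℤ) + (t.val : ℤ) ^ 2)) = -(p : ℤ) := by
  classical
  have hp2 : p ≠ 2 := by omega
  have key : ∀ t x : ZMod p,
      legendreSym p ((x.val : ℤ) ^ 3 + (t.val : ℤ) * (x.val : ℤ) ^ 2
          + (t.val : ℤ) * (x.val : ℤ) + (t.val : ℤ) ^ 2)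
        = quadraticChar (ZMod p) (x ^ 3 + t * x ^ 2 + t * x + t ^ 2) := by
    intro t x
    unfold legendreSym
    congr 1
    push_cast
    simp [ZMod.natCast_val, ZMod.cast_id]
  rw [Finset.sum_neg_distrib, neg_inj]
  calc ∑ t : ZMod p, ∑ x : ZMod p,
        legendreSym p ((x.val : ℤ) ^ 3 + (t.val : ℤ) * (x.val : ℤ) ^ 2
          + (t.val : ℤ) * (x.val : ℤ) + (t.val : ℤ) ^ 2)
      = ∑ x : ZMod p, ∑ t : ZMod p,
          quadraticChar (ZMod p) (t ^ 2 + (x ^ 2 + x) * t + x ^ 3) := by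
        rw [Finset.sum_comm]
        exact Finset.sum_congr rfl fun x _ => Finset.sum_congr rfl fun t _ => by
          rw [key t x]; congr 1; ring
    _ = ∑ x : ZMod p, if (x ^ 2 + x) ^ 2 - 4 * x ^ 3 = 0 then (p : ℤ) - 1 else -1 := by
        exact Finset.sum_congr rfl fun x _ =>
          sum_quadChar_quadratic hp2 (x ^ 2 + x) (x ^ 3)
    _ = ∑ x : ZMod p, (-1 + if x = 0 ∨ x = 1 then (p : ℤ) else 0) := by
        refine Finset.sum_congr rfl fun x _ => ?_
        have hcond : (x ^ 2 + x) ^ 2 - 4 * x ^ 3 = 0 ↔ x = 0 ∨ x = 1 := by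
          constructor
          · intro h
            have h' : (x * (x - 1)) ^ 2 = 0 := by linear_combination h
            have := pow_eq_zero_iff (n := 2) (by norm_num) |>.mp h'
            rcases mul_eq_zero.mp this with h0 | h1
            · exact Or.inl h0
            · exact Or.inr (by linear_combination h1)
          · rintro (h | h) <;> subst h <;> ring
        by_cases h : x = 0 ∨ x = 1
        · rw [if_pos (hcond.mpr h), if_pos h]; ring
        · rw [if_neg (fun hh => h (hcond.mp hh)), if_neg h]; ring
    _ = (p : ℤ) := by
        rw [Finset.sum_add_distrib, Finset.sum_const, Finset.card_univ, ZMod.card]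
        have h01 : (0 : ZMod p) ≠ 1 := by
          intro h
          have := (Fact.out : p.Prime).one_lt
          exact one_ne_zero (h.symm)
        have : ∀ x : ZMod p, (x = 0 ∨ x = 1) ↔ x ∈ ({0, 1} : Finset (ZMod p)) := by
          intro x; simp
        rw [Finset.sum_congr rfl fun x _ => by rw [if_congr (this x) rfl rfl]]
        rw [Finset.sum_ite_mem, Finset.univ_inter, Finset.sum_const,
          Finset.card_insert_of_notMem (by simp [h01]), Finset.card_singleton]
        push_cast
        ring
end

section
/- Let p > 3 be a prime. For the one-parameter family y² = x³ + t x² + t x + t², the second-moment sum satisfies ∑_{t mod p} a_t(p)² = p² − p − 1 − 2p·δ_{1,4}(p), where a_t(p) := −∑_{x mod p} χ(x³ + t x² + t x + t²). -/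
open Finset

section ChiAux

variable {F : Type*} [Field F] [Fintype F] [DecidableEq F]

private lemma chiAux_inv (x : F) : quadraticChar F x⁻¹ = quadraticChar F x := by
  rcases eq_or_ne x 0 with h | h
  · simp [h]
  · have h1 : quadraticChar F x * quadraticChar F x⁻¹ = 1 := by
      rw [← map_mul, mul_inv_cancel₀ h, map_one]
    calc quadraticChar F x⁻¹ = (quadraticChar F x ^ 2) * quadraticChar F x⁻¹ := by
            rw [quadraticChar_sq_one h, one_mul]
      _ = quadraticChar F x * (quadraticChar F x * quadraticChar F x⁻¹) := by ring
      _ = quadraticChar F x := by rw [h1, mul_one]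

private lemma chiAux_sq_mul {c : F} (hc : c ≠ 0) (b : F) :
    quadraticChar F (c ^ 2 * b) = quadraticChar F b := by
  rw [map_mul, quadraticChar_sq_one' hc, one_mul]

private lemma chiAux_shift (hF : ringChar F ≠ 2) (c : F) :
    ∑ x : F, quadraticChar F (c + x) = 0 := by
  rw [← quadraticChar_sum_zero hF]
  exact Equiv.sum_comp (Equiv.addLeft c) (fun z => quadraticChar F z)

private lemma chiAux_ite_count (c : F) :
    ∑ x : F, (if x = c then (0 : ℤ) else 1) = (Fintype.card F : ℤ) - 1 := by
  have h : ∀ x : F, (if x = c then (0 : ℤ) else 1) = 1 - (if x = c then 1 else 0) := by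
    intro x; split <;> ring
  simp only [h]
  rw [Finset.sum_sub_distrib, Finset.sum_const, Finset.sum_ite_eq' Finset.univ c
    (fun _ => (1 : ℤ))]
  simp [Finset.card_univ]

private lemma chiAux_mulshift (hF : ringChar F ≠ 2) {d : F} (hd : d ≠ 0) :
    ∑ x : F, quadraticChar F (x * (x + d)) = -1 := by
  rw [Fintype.sum_eq_add_sum_compl 0]
  have h0 : quadraticChar F ((0 : F) * (0 + d)) = 0 := by simp
  rw [h0, zero_add]
  have hbij : ∑ x ∈ ({(0 : F)}ᶜ : Finset F), quadraticChar F (x * (x + d))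
      = ∑ x ∈ ({(0 : F)}ᶜ : Finset F), quadraticChar F (1 + x) := by
    refine Finset.sum_nbij' (fun a => d * a⁻¹) (fun a => d * a⁻¹) ?_ ?_ ?_ ?_ ?_
    · intro a ha
      simp only [Finset.mem_compl, Finset.mem_singleton] at *
      exact mul_ne_zero hd (inv_ne_zero ha)
    · intro a ha
      simp only [Finset.mem_compl, Finset.mem_singleton] at *
      exact mul_ne_zero hd (inv_ne_zero ha)
    · intro a ha
      simp only [Finset.mem_compl, Finset.mem_singleton] at ha
      field_simp
    · intro a ha
      simp only [Finset.mem_compl, Finset.mem_singleton] at ha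
      field_simp
    · intro a ha
      simp only [Finset.mem_compl, Finset.mem_singleton] at ha
      have key : a * (a + d) = a ^ 2 * (1 + d * a⁻¹) := by
        field_simp
      rw [key, chiAux_sq_mul ha]
  rw [hbij]
  have htot := Fintype.sum_eq_add_sum_compl (0 : F) (fun x => quadraticChar F (1 + x))
  have hsum := chiAux_shift hF (1 : F)
  rw [htot] at hsum
  simp only [add_zero, map_one] at hsum
  linarith

private lemma chiAux_quad (hF : ringChar F ≠ 2) (a b : F) :
    ∑ x : F, quadraticChar F ((a + x) * (b + x))
      = if a = b then (Fintype.card F : ℤ) - 1 else -1 := by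
  rcases eq_or_ne a b with h | h
  · subst h
    simp only [if_pos rfl]
    have h1 : ∀ x : F, (quadraticChar F ((a + x) * (a + x)) : ℤ)
        = if x = -a then 0 else 1 := by
      intro x
      rcases eq_or_ne x (-a) with hx | hx
      · simp [hx]
      · rw [if_neg hx, ← sq, quadraticChar_sq_one']
        intro hax
        exact hx (by linear_combination hax - a - x)
    simp only [h1]
    exact chiAux_ite_count (-a)
  · rw [if_neg h]
    have h2 : ∀ x : F, quadraticChar F ((a + x) * (b + x))
        = (fun z => quadraticChar F (z * (z + (b - a)))) ((Equiv.addLeft a) x) := by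
      intro x
      simp only [Equiv.coe_addLeft]
      ring_nf
    rw [Finset.sum_congr rfl (fun x _ => h2 x),
      Equiv.sum_comp (Equiv.addLeft a) (fun z => quadraticChar F (z * (z + (b - a))))]
    exact chiAux_mulshift hF (sub_ne_zero_of_ne (Ne.symm h))

end ChiAux

/-- For a prime `p > 3` and the family `y² = x³ + t x² + t x + t²`,
the second-moment sum equals `p² - p - 1 - 2p δ_{1,4}(p)`. -/
theorem second_moment_family_four (p : ℕ) [Fact p.Prime] (hp : 3 < p) :
    ∑ t : ZMod p,
      (-∑ x : ZMod p,
        legendreSym p ((x.val : ℤ) ^ 3 + (t.val : ℤ) * (x.val : ℤ) ^ 2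
          + (t.val : ℤ) * (x.val : ℤ) + (t.val : ℤ) ^ 2)) ^ 2 =
      (p : ℤ) ^ 2 - (p : ℤ) - 1 - 2 * (p : ℤ) * (if p % 4 = 1 then 1 else 0) := by
  have pp : p.Prime := Fact.out
  have hp2 : p ≠ 2 := by omega
  have hF : ringChar (ZMod p) ≠ 2 := by
    rw [ZMod.ringChar_zmod_n]; exact hp2
  have hcard : (Fintype.card (ZMod p) : ℤ) = (p : ℤ) := by
    rw [ZMod.card]
  set χ : MulChar (ZMod p) ℤ := quadraticChar (ZMod p) with hχdef
  -- rewrite the Legendre symbols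
  have key : ∀ t x : ZMod p,
      legendreSym p ((x.val : ℤ) ^ 3 + (t.val : ℤ) * (x.val : ℤ) ^ 2
          + (t.val : ℤ) * (x.val : ℤ) + (t.val : ℤ) ^ 2)
        = χ ((x + t) * (x ^ 2 + t)) := by
    intro t x
    show χ _ = χ _
    congr 1
    push_cast [ZMod.natCast_val, ZMod.cast_id]
    ring
  simp only [key, neg_sq]
  -- value at t = 0
  have hB0 : (∑ x : ZMod p, χ ((x + 0) * (x ^ 2 + 0))) = 0 := by
    have e : ∀ x : ZMod p, χ ((x + 0) * (x ^ 2 + 0)) = χ x := by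
      intro x
      rcases eq_or_ne x 0 with hx | hx
      · simp [hx]
      · have e2 : (x + 0) * (x ^ 2 + 0) = x ^ 2 * x := by ring
        rw [e2, hχdef, chiAux_sq_mul hx]
    simp only [e]
    exact quadraticChar_sum_zero hF
  -- substitution x ↦ t x⁻¹ for t ≠ 0
  have h1 : ∀ t : ZMod p, t ≠ 0 →
      (∑ x : ZMod p, χ ((x + t) * (x ^ 2 + t)))
        = 1 + ∑ x : ZMod p, χ (x * (x + 1) * (x ^ 2 + t)) := by
    intro t ht
    rw [Fintype.sum_eq_add_sum_compl 0,
      Fintype.sum_eq_add_sum_compl (0 : ZMod p) (fun x => χ (x * (x + 1) * (x ^ 2 + t)))]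
    have e1 : χ (((0 : ZMod p) + t) * ((0 : ZMod p) ^ 2 + t)) = 1 := by
      have e : ((0 : ZMod p) + t) * ((0 : ZMod p) ^ 2 + t) = t ^ 2 := by ring
      rw [e, hχdef, quadraticChar_sq_one' ht]
    have e2 : χ ((0 : ZMod p) * ((0 : ZMod p) + 1) * ((0 : ZMod p) ^ 2 + t)) = 0 := by
      simp [hχdef]
    rw [e1, e2, zero_add]
    congr 1
    refine Finset.sum_nbij' (fun a => t * a⁻¹) (fun a => t * a⁻¹) ?_ ?_ ?_ ?_ ?_
    · intro a ha
      simp only [Finset.mem_compl, Finset.mem_singleton] at *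
      exact mul_ne_zero ht (inv_ne_zero ha)
    · intro a ha
      simp only [Finset.mem_compl, Finset.mem_singleton] at *
      exact mul_ne_zero ht (inv_ne_zero ha)
    · intro a ha
      simp only [Finset.mem_compl, Finset.mem_singleton] at ha
      field_simp
    · intro a ha
      simp only [Finset.mem_compl, Finset.mem_singleton] at ha
      field_simp
    · intro a ha
      simp only [Finset.mem_compl, Finset.mem_singleton] at ha
      have e3 : (t * a⁻¹) * ((t * a⁻¹) + 1) * ((t * a⁻¹) ^ 2 + t)
          = (t * a⁻¹ ^ 2) ^ 2 * ((a + t) * (a ^ 2 + t)) := by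
        field_simp; ring
      rw [e3, hχdef, chiAux_sq_mul (mul_ne_zero ht (pow_ne_zero 2 (inv_ne_zero ha)))]
  -- total of C over all t is 0
  have htotC : ∑ t : ZMod p, (∑ x : ZMod p, χ (x * (x + 1) * (x ^ 2 + t))) = 0 := by
    rw [Finset.sum_comm]
    have e : ∀ x : ZMod p, ∑ t : ZMod p, χ (x * (x + 1) * (x ^ 2 + t)) = 0 := by
      intro x
      have e2 : ∀ t : ZMod p, χ (x * (x + 1) * (x ^ 2 + t))
          = χ (x * (x + 1)) * χ (x ^ 2 + t) := fun t => map_mul _ _ _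
      simp only [e2]
      rw [← Finset.mul_sum, hχdef, chiAux_shift hF (x ^ 2), mul_zero]
    simp only [e, Finset.sum_const_zero]
  -- C at 0
  have hC0 : (∑ x : ZMod p, χ (x * (x + 1) * (x ^ 2 + 0))) = -1 := by
    have e : ∀ x : ZMod p, χ (x * (x + 1) * (x ^ 2 + 0)) = χ (x * (x + 1)) := by
      intro x
      rcases eq_or_ne x 0 with hx | hx
      · simp [hx]
      · have e2 : x * (x + 1) * (x ^ 2 + 0) = x ^ 2 * (x * (x + 1)) := by ring
        rw [e2, hχdef, chiAux_sq_mul hx]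
    simp only [e]
    exact chiAux_mulshift hF one_ne_zero
  have hw : (∑ x : ZMod p, χ (x * (x + 1))) = -1 := chiAux_mulshift hF one_ne_zero
  -- sum of squares of w
  have hsq : (∑ x : ZMod p, (χ (x * (x + 1))) ^ 2) = (p : ℤ) - 2 := by
    have hne01 : (0 : ZMod p) ≠ -1 := by
      intro h
      exact (neg_ne_zero.mpr one_ne_zero) h.symm
    have k : ∀ x : ZMod p, (χ (x * (x + 1))) ^ 2
        = (if x = 0 then (0 : ℤ) else 1) + (if x = -1 then 0 else 1) - 1 := by
      intro x
      rcases eq_or_ne x 0 with h0 | h0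
      · subst h0
        simp [hχdef, hne01]
      · rcases eq_or_ne x (-1) with h1' | h1'
        · subst h1'
          have hne : (-1 : ZMod p) ≠ 0 := neg_ne_zero.mpr one_ne_zero
          simp [hχdef, hne]
        · have hx1 : x + 1 ≠ 0 := by
            intro h; exact h1' (by linear_combination h)
          rw [if_neg h0, if_neg h1', hχdef, quadraticChar_sq_one (mul_ne_zero h0 hx1)]
          norm_num
    simp only [k]
    rw [Finset.sum_sub_distrib, Finset.sum_add_distrib, chiAux_ite_count (0 : ZMod p),
      chiAux_ite_count (-1 : ZMod p), Finset.sum_const, Finset.card_univ]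
    rw [ZMod.card]
    push_cast
    ring
  -- the twisted sum
  have hneg : (∑ x : ZMod p, χ (x ^ 2) * χ (x ^ 2 - 1)) = -1 - χ (-1) := by
    have k : ∀ x : ZMod p, χ (x ^ 2) * χ (x ^ 2 - 1)
        = χ ((-1 + x) * (1 + x)) - (if x = 0 then χ (-1) else 0) := by
      intro x
      rcases eq_or_ne x 0 with h0 | h0
      · subst h0
        have e : ((-1 : ZMod p) + 0) * (1 + 0) = -1 := by ring
        simp [hχdef, e]
      · have e : (-1 + x) * (1 + x) = x ^ 2 - 1 := by ring
        rw [if_neg h0, e, hχdef, quadraticChar_sq_one' h0, one_mul, sub_zero]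
    simp only [k]
    rw [Finset.sum_sub_distrib, hχdef, chiAux_quad hF (-1 : ZMod p) 1,
      if_neg (Ring.neg_one_ne_one_of_char_ne_two hF),
      Finset.sum_ite_eq' Finset.univ (0 : ZMod p) (fun _ => quadraticChar (ZMod p) (-1))]
    simp
  -- diagonal contribution
  have hD : ∀ x : ZMod p,
      (∑ y : ZMod p, χ (x * (x + 1)) * χ (y * (y + 1)) * (if x ^ 2 = y ^ 2 then (p : ℤ) else 0))
        = (p : ℤ) * ((χ (x * (x + 1))) ^ 2 + χ (x ^ 2) * χ (x ^ 2 - 1)) := by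
    intro x
    rcases eq_or_ne x 0 with h0 | h0
    · subst h0
      simp [hχdef]
    · have hxx : x ≠ -x := by
        intro h
        exact h0 ((Ring.eq_self_iff_eq_zero_of_char_ne_two hF).mp h.symm)
      have hfilter : Finset.univ.filter (fun y : ZMod p => x ^ 2 = y ^ 2) = {x, -x} := by
        ext y
        simp only [Finset.mem_filter, Finset.mem_univ, true_and, Finset.mem_insert,
          Finset.mem_singleton]
        constructor
        · intro h
          have e : (y - x) * (y + x) = 0 := by linear_combination -h
          rcases mul_eq_zero.mp e with h' | h'
          · left; linear_combination h'
          · right; linear_combination h'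
        · rintro (rfl | rfl) <;> ring
      simp only [mul_ite, mul_zero]
      rw [← Finset.sum_filter, hfilter, Finset.sum_pair hxx]
      have e2 : χ (x * (x + 1)) * χ ((-x) * ((-x) + 1)) = χ (x ^ 2) * χ (x ^ 2 - 1) := by
        rw [← map_mul, ← map_mul]
        congr 1
        ring
      linear_combination (p : ℤ) * e2
  -- second moment of C
  have h5 : (∑ t : ZMod p, (∑ x : ZMod p, χ (x * (x + 1) * (x ^ 2 + t))) ^ 2)
      = -1 + (p : ℤ) * ((p : ℤ) - 3) - (p : ℤ) * χ (-1) := by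
    have hpt : ∀ t : ZMod p, (∑ x : ZMod p, χ (x * (x + 1) * (x ^ 2 + t))) ^ 2
        = ∑ x : ZMod p, ∑ y : ZMod p,
            χ (x * (x + 1)) * χ (y * (y + 1)) * χ ((x ^ 2 + t) * (y ^ 2 + t)) := by
      intro t
      rw [sq, Finset.sum_mul_sum]
      refine Finset.sum_congr rfl fun x _ => Finset.sum_congr rfl fun y _ => ?_
      simp only [map_mul]
      ring
    simp only [hpt]
    rw [Finset.sum_comm]
    have hswap : ∀ x : ZMod p,
        (∑ t : ZMod p, ∑ y : ZMod p,
            χ (x * (x + 1)) * χ (y * (y + 1)) * χ ((x ^ 2 + t) * (y ^ 2 + t)))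
          = ∑ y : ZMod p, ∑ t : ZMod p,
            χ (x * (x + 1)) * χ (y * (y + 1)) * χ ((x ^ 2 + t) * (y ^ 2 + t)) :=
      fun x => Finset.sum_comm
    simp only [hswap]
    have hinner : ∀ x y : ZMod p,
        (∑ t : ZMod p, χ (x * (x + 1)) * χ (y * (y + 1)) * χ ((x ^ 2 + t) * (y ^ 2 + t)))
          = χ (x * (x + 1)) * χ (y * (y + 1)) * (if x ^ 2 = y ^ 2 then (p : ℤ) else 0)
            - χ (x * (x + 1)) * χ (y * (y + 1)) := by
      intro x y
      rw [← Finset.mul_sum, hχdef, chiAux_quad hF (x ^ 2) (y ^ 2), hcard]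
      split_ifs <;> ring
    simp only [hinner]
    simp only [Finset.sum_sub_distrib]
    have hsum1 : (∑ x : ZMod p, ∑ y : ZMod p,
        χ (x * (x + 1)) * χ (y * (y + 1)) * (if x ^ 2 = y ^ 2 then (p : ℤ) else 0))
          = (p : ℤ) * (((p : ℤ) - 2) + (-1 - χ (-1))) := by
      rw [Finset.sum_congr rfl fun x _ => hD x,
        ← Finset.mul_sum, Finset.sum_add_distrib, hsq, hneg]
    have hsum2 : (∑ x : ZMod p, ∑ y : ZMod p, χ (x * (x + 1)) * χ (y * (y + 1))) = 1 := by
      rw [← Finset.sum_mul_sum, hw]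
      norm_num
    rw [hsum1, hsum2]
    ring
  -- assemble
  have hsplitB := Fintype.sum_eq_add_sum_compl (0 : ZMod p)
    (fun t => (∑ x : ZMod p, χ ((x + t) * (x ^ 2 + t))) ^ 2)
  have hsplitC := Fintype.sum_eq_add_sum_compl (0 : ZMod p)
    (fun t => ∑ x : ZMod p, χ (x * (x + 1) * (x ^ 2 + t)))
  have hsplitC2 := Fintype.sum_eq_add_sum_compl (0 : ZMod p)
    (fun t => (∑ x : ZMod p, χ (x * (x + 1) * (x ^ 2 + t))) ^ 2)
  have hcompl : ∑ t ∈ ({(0 : ZMod p)}ᶜ : Finset (ZMod p)),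
      (∑ x : ZMod p, χ ((x + t) * (x ^ 2 + t))) ^ 2
      = ∑ t ∈ ({(0 : ZMod p)}ᶜ : Finset (ZMod p)),
        (1 + 2 * (∑ x : ZMod p, χ (x * (x + 1) * (x ^ 2 + t)))
          + (∑ x : ZMod p, χ (x * (x + 1) * (x ^ 2 + t))) ^ 2) := by
    refine Finset.sum_congr rfl fun t ht => ?_
    rw [Finset.mem_compl, Finset.mem_singleton] at ht
    rw [h1 t ht]
    ring
  have hcc : ((({(0 : ZMod p)}ᶜ : Finset (ZMod p)).card : ℤ)) = (p : ℤ) - 1 := by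
    rw [Finset.card_compl, Finset.card_singleton, ZMod.card,
      Nat.cast_sub (by omega : 1 ≤ p)]
    norm_num
  rw [hsplitB, hB0, hcompl, Finset.sum_add_distrib, Finset.sum_add_distrib,
    Finset.sum_const, ← Finset.mul_sum]
  have hCcompl : (∑ t ∈ ({(0 : ZMod p)}ᶜ : Finset (ZMod p)),
      ∑ x : ZMod p, χ (x * (x + 1) * (x ^ 2 + t))) = 1 := by
    rw [htotC] at hsplitC
    rw [hC0] at hsplitC
    linarith
  have hC2compl : (∑ t ∈ ({(0 : ZMod p)}ᶜ : Finset (ZMod p)),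
      (∑ x : ZMod p, χ (x * (x + 1) * (x ^ 2 + t))) ^ 2)
        = -2 + (p : ℤ) * ((p : ℤ) - 3) - (p : ℤ) * χ (-1) := by
    rw [h5] at hsplitC2
    rw [hC0] at hsplitC2
    have : ((-1 : ℤ)) ^ 2 = 1 := by norm_num
    rw [this] at hsplitC2
    linarith
  rw [hCcompl, hC2compl]
  have hchi4 : χ (-1) = ZMod.χ₄ p := by
    rw [hχdef, quadraticChar_neg_one hF, ZMod.card]
  rw [nsmul_eq_mul, mul_one, hcc, hchi4]
  have hodd : p % 2 = 1 := Nat.odd_iff.mp (pp.odd_of_ne_two hp2)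
  have h14 : p % 4 = 1 ∨ p % 4 = 3 := by omega
  rcases h14 with h | h
  · rw [if_pos h, ZMod.χ₄_nat_one_mod_four h]
    ring
  · rw [if_neg (by omega), ZMod.χ₄_nat_three_mod_four h]
    ring
end

section
/- Let p ≥ 5 be a prime. For the two-parameter family y² = x³ + t x + s x², the second-moment sum satisfies ∑_{t mod p} ∑_{s mod p} a_{t,s}(p)² = p³ − 2p² + p, where a_{t,s}(p) := −∑_{x mod p} χ(x³ + t x + s x²). -/
open Finset

section aux
variable {p : ℕ} [Fact p.Prime]

private lemma key_zero' :
    ∑ u : ZMod p, quadraticChar (ZMod p) u * quadraticChar (ZMod p) u = (p : ℤ) - 1 := by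
  rw [← Finset.sum_erase (f := fun u : ZMod p =>
      quadraticChar (ZMod p) u * quadraticChar (ZMod p) u) (a := 0) univ (by simp)]
  have h : ∀ u ∈ univ.erase (0 : ZMod p),
      quadraticChar (ZMod p) u * quadraticChar (ZMod p) u = 1 := by
    intro u hu
    have hu0 : u ≠ 0 := (Finset.mem_erase.mp hu).1
    have := quadraticChar_sq_one hu0
    rwa [sq] at this
  rw [Finset.sum_congr rfl h, Finset.sum_const, Finset.card_erase_of_mem (mem_univ _),
    Finset.card_univ, ZMod.card]
  have hp1 : 1 ≤ p := (Fact.out : p.Prime).one_lt.le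
  simp only [nsmul_eq_mul, mul_one]
  omega

private lemma key_ne (hp : 5 ≤ p) {c : ZMod p} (hc : c ≠ 0) :
    ∑ u : ZMod p, quadraticChar (ZMod p) u * quadraticChar (ZMod p) (u + c) = -1 := by
  have hchar : ringChar (ZMod p) ≠ 2 := by
    rw [ZMod.ringChar_zmod_n]; omega
  rw [← Finset.sum_erase (f := fun u : ZMod p =>
      quadraticChar (ZMod p) u * quadraticChar (ZMod p) (u + c)) (a := 0) univ (by simp)]
  have step1 : ∀ u ∈ univ.erase (0 : ZMod p),
      quadraticChar (ZMod p) u * quadraticChar (ZMod p) (u + c)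
        = quadraticChar (ZMod p) (1 + c * u⁻¹) := by
    intro u hu
    have hu0 : u ≠ 0 := (Finset.mem_erase.mp hu).1
    have harg : u + c = u * (1 + c * u⁻¹) := by field_simp
    rw [harg, map_mul, ← mul_assoc, ← sq, quadraticChar_sq_one hu0, one_mul]
  rw [Finset.sum_congr rfl step1]
  have step2 : ∑ u ∈ univ.erase (0 : ZMod p), quadraticChar (ZMod p) (1 + c * u⁻¹)
      = ∑ w ∈ univ.erase (1 : ZMod p), quadraticChar (ZMod p) w := by
    apply Finset.sum_nbij' (i := fun u => 1 + c * u⁻¹) (j := fun w => c * (w - 1)⁻¹)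
    · intro u hu
      have hu0 : u ≠ 0 := (Finset.mem_erase.mp hu).1
      refine Finset.mem_erase.mpr ⟨?_, mem_univ _⟩
      intro h
      have : c * u⁻¹ = 0 := by linear_combination h
      simp [hc, hu0, inv_eq_zero] at this
    · intro w hw
      have hw1 : w ≠ 1 := (Finset.mem_erase.mp hw).1
      refine Finset.mem_erase.mpr ⟨?_, mem_univ _⟩
      have : w - 1 ≠ 0 := sub_ne_zero.mpr hw1
      simp [hc, inv_eq_zero, this]
    · intro u hu
      have hu0 : u ≠ 0 := (Finset.mem_erase.mp hu).1
      field_simp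
      rw [add_sub_cancel_left, div_self hc]
    · intro w hw
      have hw1 : w ≠ 1 := (Finset.mem_erase.mp hw).1
      have : w - 1 ≠ 0 := sub_ne_zero.mpr hw1
      field_simp
      ring
    · intro u hu; rfl
  rw [step2, Finset.sum_erase_eq_sub (mem_univ _), quadraticChar_sum_zero hchar, map_one]
  ring

private lemma key (hp : 5 ≤ p) (c : ZMod p) :
    ∑ u : ZMod p, quadraticChar (ZMod p) u * quadraticChar (ZMod p) (u + c)
      = if c = 0 then (p : ℤ) - 1 else -1 := by
  by_cases hc : c = 0
  · simp only [hc, add_zero, if_true]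
    exact key_zero'
  · rw [if_neg hc]; exact key_ne hp hc

private lemma sum_key (hp : 5 ≤ p) :
    ∑ c : ZMod p, ∑ u : ZMod p,
      quadraticChar (ZMod p) u * quadraticChar (ZMod p) (u + c) = 0 := by
  have : ∀ c : ZMod p, ∑ u : ZMod p,
      quadraticChar (ZMod p) u * quadraticChar (ZMod p) (u + c)
        = if c = 0 then (p : ℤ) - 1 else -1 := fun c => key hp c
  rw [Finset.sum_congr rfl fun c _ => this c]
  have h2 : ∀ c : ZMod p, (if c = 0 then (p : ℤ) - 1 else -1)
      = (if c = 0 then (p : ℤ) else 0) - 1 := by intro c; split <;> ring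
  rw [Finset.sum_congr rfl fun c _ => h2 c, Finset.sum_sub_distrib]
  simp [Finset.sum_ite_eq', Finset.card_univ, ZMod.card]


private lemma sm_inner_aux (hp : 5 ≤ p) (x y : ZMod p) :
    ∑ t : ZMod p, ∑ s : ZMod p,
      quadraticChar (ZMod p) (x ^ 3 + t * x + s * x ^ 2) *
        quadraticChar (ZMod p) (y ^ 3 + t * y + s * y ^ 2)
      = if x ≠ 0 ∧ x = y then (p : ℤ) ^ 2 - p else 0 := by
  by_cases hx : x = 0
  · simp [hx]
  by_cases hy : y = 0
  · simp [hy, hx]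
  -- factor out χ x * χ y
  have step : ∀ t s : ZMod p,
      quadraticChar (ZMod p) (x ^ 3 + t * x + s * x ^ 2) *
        quadraticChar (ZMod p) (y ^ 3 + t * y + s * y ^ 2)
      = (quadraticChar (ZMod p) x * quadraticChar (ZMod p) y) *
        (quadraticChar (ZMod p) (x ^ 2 + t + s * x) *
          quadraticChar (ZMod p) (y ^ 2 + t + s * y)) := by
    intro t s
    have h1 : x ^ 3 + t * x + s * x ^ 2 = x * (x ^ 2 + t + s * x) := by ring
    have h2 : y ^ 3 + t * y + s * y ^ 2 = y * (y ^ 2 + t + s * y) := by ring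
    rw [h1, h2, map_mul, map_mul]; ring
  have hrw : ∑ t : ZMod p, ∑ s : ZMod p,
      quadraticChar (ZMod p) (x ^ 3 + t * x + s * x ^ 2) *
        quadraticChar (ZMod p) (y ^ 3 + t * y + s * y ^ 2)
      = (quadraticChar (ZMod p) x * quadraticChar (ZMod p) y) *
        ∑ s : ZMod p, ∑ t : ZMod p,
          quadraticChar (ZMod p) (x ^ 2 + t + s * x) *
            quadraticChar (ZMod p) (y ^ 2 + t + s * y) := by
    rw [Finset.mul_sum]
    rw [Finset.sum_comm]
    refine Finset.sum_congr rfl fun s _ => ?_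
    rw [Finset.mul_sum]
    exact Finset.sum_congr rfl fun t _ => step t s
  rw [hrw]
  -- inner t-sum via translation
  have tsum : ∀ s : ZMod p,
      ∑ t : ZMod p, quadraticChar (ZMod p) (x ^ 2 + t + s * x) *
          quadraticChar (ZMod p) (y ^ 2 + t + s * y)
      = ∑ u : ZMod p, quadraticChar (ZMod p) u *
          quadraticChar (ZMod p) (u + ((y ^ 2 + s * y) - (x ^ 2 + s * x))) := by
    intro s
    refine Fintype.sum_equiv (Equiv.addRight (x ^ 2 + s * x)) _ _ fun t => ?_
    simp only [Equiv.coe_addRight]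
    have h1 : x ^ 2 + t + s * x = t + (x ^ 2 + s * x) := by ring
    have h2 : y ^ 2 + t + s * y
        = (t + (x ^ 2 + s * x)) + ((y ^ 2 + s * y) - (x ^ 2 + s * x)) := by ring
    rw [h1, h2]
  rw [Finset.sum_congr rfl fun s _ => tsum s]
  by_cases hxy : x = y
  · subst hxy
    have : ∀ s : ZMod p, ((x ^ 2 + s * x) - (x ^ 2 + s * x)) = (0 : ZMod p) := by
      intro s; ring
    have hval : ∀ s : ZMod p,
        ∑ u : ZMod p, quadraticChar (ZMod p) u *
          quadraticChar (ZMod p) (u + ((x ^ 2 + s * x) - (x ^ 2 + s * x)))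
        = (p : ℤ) - 1 := by
      intro s
      rw [this s]
      simpa using key hp (0 : ZMod p)
    rw [Finset.sum_congr rfl fun s _ => hval s, Finset.sum_const, Finset.card_univ,
      ZMod.card, nsmul_eq_mul]
    have hxx : quadraticChar (ZMod p) x * quadraticChar (ZMod p) x = 1 := by
      have := quadraticChar_sq_one hx; rwa [sq] at this
    rw [hxx, if_pos ⟨hx, rfl⟩]
    ring
  · have hyx : y - x ≠ 0 := sub_ne_zero.mpr (Ne.symm hxy)
    have hbij : ∑ s : ZMod p,
        ∑ u : ZMod p, quadraticChar (ZMod p) u *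
          quadraticChar (ZMod p) (u + ((y ^ 2 + s * y) - (x ^ 2 + s * x)))
        = ∑ c : ZMod p, ∑ u : ZMod p, quadraticChar (ZMod p) u *
            quadraticChar (ZMod p) (u + c) := by
      refine Fintype.sum_equiv
        ((Equiv.mulRight₀ (y - x) hyx).trans (Equiv.addRight (y ^ 2 - x ^ 2))) _ _ fun s => ?_
      simp only [Equiv.trans_apply, Equiv.mulRight₀_apply, Equiv.coe_addRight]
      have harg : (y ^ 2 + s * y) - (x ^ 2 + s * x) = s * (y - x) + (y ^ 2 - x ^ 2) := by
        ring
      rw [harg]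
    rw [hbij, sum_key hp, mul_zero, if_neg (by tauto)]

end aux

/-- For a prime `p ≥ 5` and the two-parameter family
`y² = x³ + t x + s x²`, the second-moment sum equals `p³ - 2p² + p`. -/
theorem second_moment_two_param_one (p : ℕ) [Fact p.Prime] (hp : 5 ≤ p) :
    ∑ t : ZMod p, ∑ s : ZMod p,
      (-∑ x : ZMod p,
        legendreSym p ((x.val : ℤ) ^ 3 + (t.val : ℤ) * (x.val : ℤ)
          + (s.val : ℤ) * (x.val : ℤ) ^ 2)) ^ 2 =
      (p : ℤ) ^ 3 - 2 * (p : ℤ) ^ 2 + (p : ℤ) := by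
  have hcast : ∀ x t s : ZMod p,
      (((x.val : ℤ) ^ 3 + (t.val : ℤ) * (x.val : ℤ)
        + (s.val : ℤ) * (x.val : ℤ) ^ 2 : ℤ) : ZMod p)
      = x ^ 3 + t * x + s * x ^ 2 := by
    intro x t s
    push_cast [ZMod.natCast_val, ZMod.cast_id]
    ring
  have h1 : ∀ t s : ZMod p,
      (∑ x : ZMod p, legendreSym p ((x.val : ℤ) ^ 3 + (t.val : ℤ) * (x.val : ℤ)
          + (s.val : ℤ) * (x.val : ℤ) ^ 2))
      = ∑ x : ZMod p, quadraticChar (ZMod p) (x ^ 3 + t * x + s * x ^ 2) := by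
    intro t s
    refine Finset.sum_congr rfl fun x _ => ?_
    simp only [legendreSym]
    rw [hcast x t s]
  calc ∑ t : ZMod p, ∑ s : ZMod p,
      (-∑ x : ZMod p,
        legendreSym p ((x.val : ℤ) ^ 3 + (t.val : ℤ) * (x.val : ℤ)
          + (s.val : ℤ) * (x.val : ℤ) ^ 2)) ^ 2
      = ∑ t : ZMod p, ∑ s : ZMod p, ∑ x : ZMod p, ∑ y : ZMod p,
          quadraticChar (ZMod p) (x ^ 3 + t * x + s * x ^ 2) *
            quadraticChar (ZMod p) (y ^ 3 + t * y + s * y ^ 2) := by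
        refine Finset.sum_congr rfl fun t _ => Finset.sum_congr rfl fun s _ => ?_
        rw [neg_sq, h1 t s, sq, Finset.sum_mul_sum]
    _ = ∑ t : ZMod p, ∑ x : ZMod p, ∑ y : ZMod p, ∑ s : ZMod p,
          quadraticChar (ZMod p) (x ^ 3 + t * x + s * x ^ 2) *
            quadraticChar (ZMod p) (y ^ 3 + t * y + s * y ^ 2) := by
        refine Finset.sum_congr rfl fun t _ => ?_
        rw [Finset.sum_comm]
        exact Finset.sum_congr rfl fun x _ => Finset.sum_comm
    _ = ∑ x : ZMod p, ∑ y : ZMod p, ∑ t : ZMod p, ∑ s : ZMod p,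
          quadraticChar (ZMod p) (x ^ 3 + t * x + s * x ^ 2) *
            quadraticChar (ZMod p) (y ^ 3 + t * y + s * y ^ 2) := by
        rw [Finset.sum_comm]
        exact Finset.sum_congr rfl fun x _ => Finset.sum_comm
    _ = ∑ x : ZMod p, ∑ y : ZMod p,
          (if x ≠ 0 ∧ x = y then (p : ℤ) ^ 2 - p else 0) := by
        exact Finset.sum_congr rfl fun x _ => Finset.sum_congr rfl fun y _ =>
          sm_inner_aux hp x y
    _ = ∑ x : ZMod p, (if x = 0 then 0 else (p : ℤ) ^ 2 - p) := by
        refine Finset.sum_congr rfl fun x _ => ?_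
        by_cases hx : x = 0
        · simp [hx]
        · simp [hx, Finset.sum_ite_eq]
    _ = (p : ℤ) ^ 3 - 2 * (p : ℤ) ^ 2 + (p : ℤ) := by
        have : ∀ x : ZMod p, (if x = 0 then (0 : ℤ) else (p : ℤ) ^ 2 - p)
            = ((p : ℤ) ^ 2 - p) - (if x = 0 then (p : ℤ) ^ 2 - p else 0) := by
          intro x; split <;> ring
        rw [Finset.sum_congr rfl fun x _ => this x, Finset.sum_sub_distrib,
          Finset.sum_const, Finset.card_univ, ZMod.card, nsmul_eq_mul]
        simp only [Finset.sum_ite_eq', Finset.mem_univ, if_true]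
        ring
end

section
/- Let p ≥ 5 be a prime. For the two-parameter family y² = x³ + t² x + s t⁴, the second-moment sum satisfies ∑_{t mod p} ∑_{s mod p} a_{t,s}(p)² = p³ − 2p² + p − 2(p² − p)·χ(−3), where a_{t,s}(p) := −∑_{x mod p} χ(x³ + t² x + s t⁴). -/
open Finset

section Aux

variable {p : ℕ} [Fact p.Prime]

private lemma nat_ne_zero (n : ℕ) (hn : 0 < n) (hp : n < p) : ((n : ℕ) : ZMod p) ≠ 0 := by
  rw [Ne, ZMod.natCast_eq_zero_iff]
  intro h
  exact absurd (Nat.le_of_dvd hn h) (not_le.mpr hp)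

/-- number of square roots as an integer-valued sum of indicators -/
private lemma sum_sqrt_ind (hp : 5 ≤ p) (w : ZMod p) :
    ∑ u : ZMod p, (if u ^ 2 = w then (1 : ℤ) else 0) = 1 + quadraticChar (ZMod p) w := by
  have h := quadraticChar_card_sqrts (char_ne_two hp) w
  rw [Finset.sum_boole]
  have hc : ({x : ZMod p | x ^ 2 = w}.toFinset).card
      = (univ.filter fun u : ZMod p => u ^ 2 = w).card := by
    congr 1
    ext x
    simp [Set.mem_toFinset]
  rw [hc] at h
  rw [h]
  ring

/-- affine reindexing: sum of χ over an affine image is 0 -/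
private lemma sum_chi_affine (hp : 5 ≤ p) (b a : ZMod p) (hb : b ≠ 0) :
    ∑ w : ZMod p, quadraticChar (ZMod p) (b * w + a) = 0 := by
  have he : Function.Bijective (fun w : ZMod p => b * w + a) := by
    constructor
    · intro x y hxy
      exact mul_left_cancel₀ hb (add_right_cancel hxy)
    · intro y
      exact ⟨b⁻¹ * (y - a), by field_simp; ring⟩
  rw [Fintype.sum_bijective (fun w : ZMod p => b * w + a) he
    (fun w => quadraticChar (ZMod p) (b * w + a)) (fun w => quadraticChar (ZMod p) w)
    (fun w => rfl)]
  exact quadraticChar_sum_zero (char_ne_two hp)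

/-- key character sum: `∑ χ(w) χ(aw+b) = -χ(a)` for `a b ≠ 0`. -/
private lemma sum_chi_mul (hp : 5 ≤ p) (a b : ZMod p) (hb : b ≠ 0) :
    ∑ w : ZMod p, quadraticChar (ZMod p) w * quadraticChar (ZMod p) (a * w + b)
      = -quadraticChar (ZMod p) a := by
  have hpt : ∀ w : ZMod p,
      quadraticChar (ZMod p) w * quadraticChar (ZMod p) (a * w + b)
        = quadraticChar (ZMod p) (a + b * w⁻¹)
          - (if w = 0 then quadraticChar (ZMod p) a else 0) := by
    intro w
    by_cases hw : w = 0
    · simp [hw]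
    · rw [if_neg hw, sub_zero, ← map_mul]
      have : w * (a * w + b) = w ^ 2 * (a + b * w⁻¹) := by field_simp
      rw [this, map_mul, quadraticChar_sq_one' hw, one_mul]
  rw [Finset.sum_congr rfl fun w _ => hpt w, Finset.sum_sub_distrib]
  have h1 : ∑ w : ZMod p, quadraticChar (ZMod p) (a + b * w⁻¹)
      = ∑ w : ZMod p, quadraticChar (ZMod p) (a + b * w) := by
    have := Equiv.sum_comp (Equiv.inv (ZMod p))
      (fun w => quadraticChar (ZMod p) (a + b * w))
    simpa using this
  have h2 : ∑ w : ZMod p, quadraticChar (ZMod p) (a + b * w) = 0 := by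
    have := sum_chi_affine hp b a hb
    calc ∑ w : ZMod p, quadraticChar (ZMod p) (a + b * w)
        = ∑ w : ZMod p, quadraticChar (ZMod p) (b * w + a) := by
          apply Finset.sum_congr rfl; intro w _; congr 1; ring
      _ = 0 := this
  have h3 : ∑ w : ZMod p, (if w = 0 then quadraticChar (ZMod p) a else 0)
      = quadraticChar (ZMod p) a := by
    simp
  rw [h1, h2, h3, zero_sub]

/-- shifted product sum -/
private lemma sum_shift (hp : 5 ≤ p) (A B : ZMod p) :
    ∑ c : ZMod p, quadraticChar (ZMod p) (A + c) * quadraticChar (ZMod p) (B + c)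
      = if A = B then (p : ℤ) - 1 else -1 := by
  have hre : ∑ c : ZMod p, quadraticChar (ZMod p) (A + c) * quadraticChar (ZMod p) (B + c)
      = ∑ c : ZMod p, quadraticChar (ZMod p) c * quadraticChar (ZMod p) (c + (B - A)) := by
    have := Equiv.sum_comp (Equiv.subRight A)
      (fun c => quadraticChar (ZMod p) (A + c) * quadraticChar (ZMod p) (B + c))
    simp only [Equiv.subRight_apply] at this
    rw [← this]
    apply Finset.sum_congr rfl
    intro c _
    congr 1 <;> congr 1 <;> ring
  rw [hre]
  by_cases hAB : A = B
  · rw [if_pos hAB, hAB, sub_self]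
    have hterm : ∀ c : ZMod p, quadraticChar (ZMod p) c * quadraticChar (ZMod p) (c + 0)
        = 1 - (if c = 0 then (1 : ℤ) else 0) := by
      intro c
      by_cases hc : c = 0
      · simp [hc]
      · rw [add_zero, if_neg hc, ← sq, quadraticChar_sq_one hc, sub_zero]
    rw [Finset.sum_congr rfl fun c _ => hterm c, Finset.sum_sub_distrib,
      Finset.sum_const, Finset.sum_ite_eq' univ (0 : ZMod p) (fun _ => (1 : ℤ))]
    simp [ZMod.card]
  · rw [if_neg hAB]
    have hd : B - A ≠ 0 := sub_ne_zero.mpr (Ne.symm hAB)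
    have := sum_chi_mul hp 1 (B - A) hd
    simpa using this

/-- quadratic sum: `∑ χ(a v² + b) = -χ(a)` for `a b ≠ 0` -/
private lemma sum_chi_quad (hp : 5 ≤ p) (a b : ZMod p) (ha : a ≠ 0) (hb : b ≠ 0) :
    ∑ v : ZMod p, quadraticChar (ZMod p) (a * v ^ 2 + b) = -quadraticChar (ZMod p) a := by
  have step1 : ∀ v : ZMod p, (quadraticChar (ZMod p) (a * v ^ 2 + b) : ℤ)
      = ∑ w : ZMod p, (if v ^ 2 = w then quadraticChar (ZMod p) (a * w + b) else 0) := by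
    intro v
    rw [Finset.sum_ite_eq univ (v ^ 2) (fun w => (quadraticChar (ZMod p) (a * w + b) : ℤ))]
    simp
  rw [Finset.sum_congr rfl fun v _ => step1 v, Finset.sum_comm]
  have step2 : ∀ w : ZMod p,
      (∑ v : ZMod p, if v ^ 2 = w then (quadraticChar (ZMod p) (a * w + b) : ℤ) else 0)
        = (1 + quadraticChar (ZMod p) w) * quadraticChar (ZMod p) (a * w + b) := by
    intro w
    rw [← sum_sqrt_ind hp w, Finset.sum_mul]
    apply Finset.sum_congr rfl
    intro v _
    split_ifs <;> simp
  rw [Finset.sum_congr rfl fun w _ => step2 w]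
  have expand : ∀ w : ZMod p,
      (1 + (quadraticChar (ZMod p) w : ℤ)) * quadraticChar (ZMod p) (a * w + b)
        = quadraticChar (ZMod p) (a * w + b)
          + quadraticChar (ZMod p) w * quadraticChar (ZMod p) (a * w + b) := by
    intro w; ring
  rw [Finset.sum_congr rfl fun w _ => expand w, Finset.sum_add_distrib,
    sum_chi_affine hp a b ha, sum_chi_mul hp a b hb, zero_add]

private lemma inner_sum_aux (hp : 5 ≤ p) (t : ZMod p) (ht : t ≠ 0) :
    ∑ s : ZMod p,
        (∑ x : ZMod p, (quadraticChar (ZMod p) (x ^ 3 + t ^ 2 * x + s * t ^ 4) : ℤ)) ^ 2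
      = (p : ℤ) ^ 2 - p - 2 * p * quadraticChar (ZMod p) (-3) := by
  have h2 : (2 : ZMod p) ≠ 0 := by
    have := nat_ne_zero (p := p) 2 (by norm_num) (by omega); push_cast at this; exact this
  have h3 : (3 : ZMod p) ≠ 0 := by
    have := nat_ne_zero (p := p) 3 (by norm_num) (by omega); push_cast at this; exact this
  have h4 : (4 : ZMod p) ≠ 0 := by
    have := nat_ne_zero (p := p) 4 (by norm_num) (by omega); push_cast at this; exact this
  -- Step 1: expand the square and push the s-sum inside
  have step1 : ∑ s : ZMod p,
        (∑ x : ZMod p, (quadraticChar (ZMod p) (x ^ 3 + t ^ 2 * x + s * t ^ 4) : ℤ)) ^ 2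
      = ∑ x : ZMod p, ∑ y : ZMod p, ∑ s : ZMod p,
          (quadraticChar (ZMod p) (x ^ 3 + t ^ 2 * x + s * t ^ 4) : ℤ)
            * quadraticChar (ZMod p) (y ^ 3 + t ^ 2 * y + s * t ^ 4) := by
    calc ∑ s : ZMod p,
          (∑ x : ZMod p, (quadraticChar (ZMod p) (x ^ 3 + t ^ 2 * x + s * t ^ 4) : ℤ)) ^ 2
        = ∑ s : ZMod p, ∑ x : ZMod p, ∑ y : ZMod p,
            (quadraticChar (ZMod p) (x ^ 3 + t ^ 2 * x + s * t ^ 4) : ℤ)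
              * quadraticChar (ZMod p) (y ^ 3 + t ^ 2 * y + s * t ^ 4) := by
          apply Finset.sum_congr rfl
          intro s _
          rw [sq, Finset.sum_mul_sum]
      _ = ∑ x : ZMod p, ∑ s : ZMod p, ∑ y : ZMod p,
            (quadraticChar (ZMod p) (x ^ 3 + t ^ 2 * x + s * t ^ 4) : ℤ)
              * quadraticChar (ZMod p) (y ^ 3 + t ^ 2 * y + s * t ^ 4) := Finset.sum_comm
      _ = _ := by
          apply Finset.sum_congr rfl
          intro x _
          exact Finset.sum_comm
  rw [step1]
  -- Step 2: evaluate the inner s-sum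
  have ht4 : t ^ 4 ≠ 0 := pow_ne_zero _ ht
  have step2 : ∀ x y : ZMod p,
      (∑ s : ZMod p, (quadraticChar (ZMod p) (x ^ 3 + t ^ 2 * x + s * t ^ 4) : ℤ)
          * quadraticChar (ZMod p) (y ^ 3 + t ^ 2 * y + s * t ^ 4))
        = if x ^ 3 + t ^ 2 * x = y ^ 3 + t ^ 2 * y then (p : ℤ) - 1 else -1 := by
    intro x y
    have hbij : Function.Bijective (fun s : ZMod p => s * t ^ 4) := by
      constructor
      · intro u v huv
        exact mul_right_cancel₀ ht4 huv
      · intro c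
        exact ⟨c * (t ^ 4)⁻¹, by field_simp⟩
    rw [Fintype.sum_bijective (fun s : ZMod p => s * t ^ 4) hbij _
      (fun c => (quadraticChar (ZMod p) (x ^ 3 + t ^ 2 * x + c) : ℤ)
        * quadraticChar (ZMod p) (y ^ 3 + t ^ 2 * y + c)) (fun s => rfl)]
    exact sum_shift hp _ _
  rw [Finset.sum_congr rfl fun x _ => Finset.sum_congr rfl fun y _ => step2 x y]
  -- Step 3: rewrite the condition
  have hcond : ∀ x y : ZMod p, (x ^ 3 + t ^ 2 * x = y ^ 3 + t ^ 2 * y)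
      ↔ (x = y ∨ x ^ 2 + x * y + y ^ 2 = -t ^ 2) := by
    intro x y
    constructor
    · intro h
      have hz : (x - y) * (x ^ 2 + x * y + y ^ 2 + t ^ 2) = 0 := by linear_combination h
      rcases mul_eq_zero.mp hz with h' | h'
      · exact Or.inl (sub_eq_zero.mp h')
      · right; linear_combination h'
    · rintro (rfl | h)
      · rfl
      · linear_combination (x - y) * h
  have hsplit : ∀ x y : ZMod p,
      (if x ^ 3 + t ^ 2 * x = y ^ 3 + t ^ 2 * y then (p : ℤ) - 1 else -1)
        = -1 + (p : ℤ) * ((if x = y then (1 : ℤ) else 0)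
            + (if x ^ 2 + x * y + y ^ 2 = -t ^ 2 then (1 : ℤ) else 0)
            - (if x = y then (if x ^ 2 + x * y + y ^ 2 = -t ^ 2 then (1 : ℤ) else 0) else 0)) := by
    intro x y
    by_cases hP : x = y <;> by_cases hQ : x ^ 2 + x * y + y ^ 2 = -t ^ 2 <;>
      simp [hcond, hP, hQ] <;> ring
  rw [Finset.sum_congr rfl fun x _ => Finset.sum_congr rfl fun y _ => hsplit x y]
  -- S1
  have hS1 : ∑ x : ZMod p, ∑ y : ZMod p, (if x = y then (1 : ℤ) else 0) = (p : ℤ) := by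
    have : ∀ x : ZMod p, ∑ y : ZMod p, (if x = y then (1 : ℤ) else 0) = 1 := by
      intro x
      rw [Finset.sum_ite_eq univ x (fun _ => (1 : ℤ))]
      simp
    rw [Finset.sum_congr rfl fun x _ => this x]
    simp [ZMod.card]
  -- S3
  have hS3 : ∑ x : ZMod p, ∑ y : ZMod p,
      (if x = y then (if x ^ 2 + x * y + y ^ 2 = -t ^ 2 then (1 : ℤ) else 0) else 0)
        = 1 + quadraticChar (ZMod p) (-3) := by
    have hin : ∀ x : ZMod p, ∑ y : ZMod p,
        (if x = y then (if x ^ 2 + x * y + y ^ 2 = -t ^ 2 then (1 : ℤ) else 0) else 0)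
          = if x ^ 2 = -t ^ 2 * 3⁻¹ then (1 : ℤ) else 0 := by
      intro x
      rw [Finset.sum_ite_eq univ x
        (fun y => if x ^ 2 + x * y + y ^ 2 = -t ^ 2 then (1 : ℤ) else 0)]
      rw [if_pos (mem_univ x)]
      have hiff' : (x ^ 2 + x * x + x ^ 2 = -t ^ 2) ↔ (x ^ 2 = -t ^ 2 * 3⁻¹) := by
        constructor
        · intro h
          field_simp
          linear_combination h
        · intro h
          field_simp at h
          linear_combination h
      rw [if_congr hiff' rfl rfl]
    rw [Finset.sum_congr rfl fun x _ => hin x, sum_sqrt_ind hp]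
    congr 1
    have hx : -t ^ 2 * 3⁻¹ = (-3) * (t * 3⁻¹) ^ 2 := by field_simp
    rw [hx, map_mul, quadraticChar_sq_one' (by
      intro h
      rcases mul_eq_zero.mp h with h' | h'
      · exact ht h'
      · exact h3 (by rwa [inv_eq_zero] at h')), mul_one]
  -- S2
  have hS2 : ∑ x : ZMod p, ∑ y : ZMod p,
      (if x ^ 2 + x * y + y ^ 2 = -t ^ 2 then (1 : ℤ) else 0)
        = (p : ℤ) - quadraticChar (ZMod p) (-3) := by
    rw [Finset.sum_comm]
    have hin : ∀ y : ZMod p, ∑ x : ZMod p,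
        (if x ^ 2 + x * y + y ^ 2 = -t ^ 2 then (1 : ℤ) else 0)
          = 1 + quadraticChar (ZMod p) ((-3) * y ^ 2 + -(4 * t ^ 2)) := by
      intro y
      have hbij : Function.Bijective (fun x : ZMod p => 2 * x + y) := by
        constructor
        · intro u v huv
          exact mul_left_cancel₀ h2 (add_right_cancel huv)
        · intro c
          exact ⟨2⁻¹ * (c - y), by field_simp; ring⟩
      have hiff : ∀ x : ZMod p, (x ^ 2 + x * y + y ^ 2 = -t ^ 2)
          ↔ ((2 * x + y) ^ 2 = (-3) * y ^ 2 + -(4 * t ^ 2)) := by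
        intro x
        constructor
        · intro h; linear_combination 4 * h
        · intro h
          apply mul_left_cancel₀ h4
          linear_combination h
      calc ∑ x : ZMod p, (if x ^ 2 + x * y + y ^ 2 = -t ^ 2 then (1 : ℤ) else 0)
          = ∑ x : ZMod p,
              (if (2 * x + y) ^ 2 = (-3) * y ^ 2 + -(4 * t ^ 2) then (1 : ℤ) else 0) := by
            apply Finset.sum_congr rfl
            intro x _
            rw [if_congr (hiff x) rfl rfl]
        _ = ∑ u : ZMod p, (if u ^ 2 = (-3) * y ^ 2 + -(4 * t ^ 2) then (1 : ℤ) else 0) := by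
            exact Fintype.sum_bijective (fun x : ZMod p => 2 * x + y) hbij _
              (fun u => if u ^ 2 = (-3) * y ^ 2 + -(4 * t ^ 2) then (1 : ℤ) else 0)
              (fun x => rfl)
        _ = 1 + quadraticChar (ZMod p) ((-3) * y ^ 2 + -(4 * t ^ 2)) := sum_sqrt_ind hp _
    rw [Finset.sum_congr rfl fun y _ => hin y, Finset.sum_add_distrib]
    have hq := sum_chi_quad hp (-3) (-(4 * t ^ 2)) (neg_ne_zero.mpr h3)
      (by
        intro h
        rw [neg_eq_zero] at h
        rcases mul_eq_zero.mp h with h' | h'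
        · exact h4 h'
        · exact pow_ne_zero 2 ht h')
    rw [hq, Finset.sum_const, Finset.card_univ, ZMod.card, nsmul_eq_mul, mul_one]
    ring
  -- final combination
  simp only [mul_add, mul_sub, Finset.sum_add_distrib, Finset.sum_sub_distrib,
    ← Finset.mul_sum, Finset.sum_const, Finset.card_univ, ZMod.card, smul_eq_mul,
    mul_neg_one]
  rw [hS1, hS2, hS3]
  ring

/-- the `t = 0` inner sum vanishes -/
private lemma inner_zero_aux (hp : 5 ≤ p) (s : ZMod p) :
    ∑ x : ZMod p,
        (quadraticChar (ZMod p) (x ^ 3 + (0 : ZMod p) ^ 2 * x + s * (0 : ZMod p) ^ 4) : ℤ)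
      = 0 := by
  have h1 : ∀ x : ZMod p, (quadraticChar (ZMod p)
      (x ^ 3 + (0 : ZMod p) ^ 2 * x + s * (0 : ZMod p) ^ 4) : ℤ)
      = quadraticChar (ZMod p) x := by
    intro x
    have hx : x ^ 3 + (0 : ZMod p) ^ 2 * x + s * (0 : ZMod p) ^ 4 = x ^ 2 * x := by ring
    rw [hx, map_mul]
    by_cases hx0 : x = 0
    · simp [hx0]
    · rw [quadraticChar_sq_one' hx0, one_mul]
  rw [Finset.sum_congr rfl fun x _ => h1 x]
  exact quadraticChar_sum_zero (char_ne_two hp)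

end Aux

/-- For a prime `p ≥ 5` and the two-parameter family
`y² = x³ + t² x + s t⁴`, the second-moment sum equals
`p³ - 2p² + p - 2(p² - p) χ(-3)`. -/
theorem second_moment_two_param_two (p : ℕ) [Fact p.Prime] (hp : 5 ≤ p) :
    ∑ t : ZMod p, ∑ s : ZMod p,
      (-∑ x : ZMod p,
        legendreSym p ((x.val : ℤ) ^ 3 + (t.val : ℤ) ^ 2 * (x.val : ℤ)
          + (s.val : ℤ) * (t.val : ℤ) ^ 4)) ^ 2 =
      (p : ℤ) ^ 3 - 2 * (p : ℤ) ^ 2 + (p : ℤ)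
        - 2 * ((p : ℤ) ^ 2 - (p : ℤ)) * legendreSym p (-3) := by
  have hleg : ∀ t s x : ZMod p,
      legendreSym p ((x.val : ℤ) ^ 3 + (t.val : ℤ) ^ 2 * (x.val : ℤ)
          + (s.val : ℤ) * (t.val : ℤ) ^ 4)
        = quadraticChar (ZMod p) (x ^ 3 + t ^ 2 * x + s * t ^ 4) := by
    intro t s x
    show quadraticChar (ZMod p)
        ((((x.val : ℤ) ^ 3 + (t.val : ℤ) ^ 2 * (x.val : ℤ)
          + (s.val : ℤ) * (t.val : ℤ) ^ 4 : ℤ)) : ZMod p) = _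
    congr 1
    push_cast
    simp [ZMod.natCast_val, ZMod.cast_id]
  have hleg3 : legendreSym p (-3) = quadraticChar (ZMod p) (-3 : ZMod p) := by
    show quadraticChar (ZMod p) (((-3 : ℤ)) : ZMod p) = _
    congr 1
    push_cast
    rfl
  have hred : ∑ t : ZMod p, ∑ s : ZMod p,
      (-∑ x : ZMod p,
        legendreSym p ((x.val : ℤ) ^ 3 + (t.val : ℤ) ^ 2 * (x.val : ℤ)
          + (s.val : ℤ) * (t.val : ℤ) ^ 4)) ^ 2
      = ∑ t : ZMod p, ∑ s : ZMod p,
          (∑ x : ZMod p,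
            (quadraticChar (ZMod p) (x ^ 3 + t ^ 2 * x + s * t ^ 4) : ℤ)) ^ 2 := by
    apply Finset.sum_congr rfl
    intro t _
    apply Finset.sum_congr rfl
    intro s _
    rw [neg_sq]
    congr 1
    exact Finset.sum_congr rfl fun x _ => hleg t s x
  rw [hred, hleg3]
  have hmain : ∀ t : ZMod p,
      (∑ s : ZMod p, (∑ x : ZMod p,
          (quadraticChar (ZMod p) (x ^ 3 + t ^ 2 * x + s * t ^ 4) : ℤ)) ^ 2)
        = if t = 0 then 0
          else (p : ℤ) ^ 2 - p - 2 * p * quadraticChar (ZMod p) (-3) := by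
    intro t
    by_cases ht : t = 0
    · rw [if_pos ht, ht]
      apply Finset.sum_eq_zero
      intro s _
      rw [inner_zero_aux hp s]
      ring
    · rw [if_neg ht]
      exact inner_sum_aux hp t ht
  rw [Finset.sum_congr rfl fun t _ => hmain t]
  have hsum : ∑ t : ZMod p,
      (if t = 0 then (0 : ℤ)
        else (p : ℤ) ^ 2 - p - 2 * p * quadraticChar (ZMod p) (-3))
      = ((p : ℤ) - 1) * ((p : ℤ) ^ 2 - p - 2 * p * quadraticChar (ZMod p) (-3)) := by
    have hpt : ∀ t : ZMod p,
        (if t = 0 then (0 : ℤ)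
          else (p : ℤ) ^ 2 - p - 2 * p * quadraticChar (ZMod p) (-3))
          = ((p : ℤ) ^ 2 - p - 2 * p * quadraticChar (ZMod p) (-3))
            - (if t = 0 then ((p : ℤ) ^ 2 - p - 2 * p * quadraticChar (ZMod p) (-3))
                else 0) := by
      intro t
      split_ifs <;> ring
    rw [Finset.sum_congr rfl fun t _ => hpt t, Finset.sum_sub_distrib, Finset.sum_const,
      Finset.card_univ, ZMod.card, nsmul_eq_mul,
      Finset.sum_ite_eq' Finset.univ (0 : ZMod p)
        (fun _ => (p : ℤ) ^ 2 - p - 2 * p * quadraticChar (ZMod p) (-3))]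
    simp
    ring
  rw [hsum]
  ring
end

section
/- Let p ≥ 5 be a prime. For the two-parameter family y² = x³ + s x² − t² x, the second-moment sum satisfies ∑_{t mod p} ∑_{s mod p} a_{t,s}(p)² = p³ − p² − δ_{1,4}(p)·(2p² − 2p), where a_{t,s}(p) := −∑_{x mod p} χ(x³ + s x² − t² x). -/
open Finset

private lemma smtp_char_ne_two {p : ℕ} [Fact p.Prime] (hp : 5 ≤ p) :
    ringChar (ZMod p) ≠ 2 := by
  rw [ZMod.ringChar_zmod_n]
  omega

private lemma smtp_sum_shift {p : ℕ} [Fact p.Prime] (hp : 5 ≤ p) (b : ZMod p) :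
    ∑ s : ZMod p, quadraticChar (ZMod p) s * quadraticChar (ZMod p) (s + b)
      = if b = 0 then (p : ℤ) - 1 else -1 := by
  have hF := smtp_char_ne_two hp
  haveI : Fact (1 < p) := ⟨by omega⟩
  rcases eq_or_ne b 0 with hb | hb
  · subst hb
    rw [if_pos rfl]
    have h1 : ∀ s : ZMod p, quadraticChar (ZMod p) s * quadraticChar (ZMod p) (s + 0)
        = if s = 0 then 0 else 1 := by
      intro s
      rcases eq_or_ne s 0 with h | h
      · simp [h]
      · rw [if_neg h, add_zero, ← pow_two, quadraticChar_sq_one h]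
    rw [Finset.sum_congr rfl fun s _ => h1 s]
    rw [Finset.sum_ite, Finset.sum_const, Finset.sum_const, smul_zero, zero_add,
      Finset.filter_ne', Finset.card_erase_of_mem (Finset.mem_univ _), Finset.card_univ,
      ZMod.card, nsmul_eq_mul, mul_one]
    have : (1:ℕ) ≤ p := by omega
    push_cast [Nat.cast_sub this]
    ring
  · rw [if_neg hb]
    have e := Equiv.mulLeft₀ (-b) (neg_ne_zero.mpr hb)
    have hsum : ∑ s : ZMod p,
        quadraticChar (ZMod p) (-b * s) * quadraticChar (ZMod p) (-b * s + b)
        = ∑ s : ZMod p, quadraticChar (ZMod p) s * quadraticChar (ZMod p) (s + b) :=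
      Fintype.sum_equiv (Equiv.mulLeft₀ (-b) (neg_ne_zero.mpr hb)) _ _ (fun s => rfl)
    rw [← hsum]
    have h2 : ∀ s : ZMod p,
        quadraticChar (ZMod p) (-b * s) * quadraticChar (ZMod p) (-b * s + b)
        = quadraticChar (ZMod p) (-1) *
            (quadraticChar (ZMod p) s * quadraticChar (ZMod p) (1 - s)) := by
      intro s
      have hb2 : -b * s + b = b * (1 - s) := by ring
      rw [hb2, map_mul, map_mul]
      have h3 : quadraticChar (ZMod p) (-b) * quadraticChar (ZMod p) b
          = quadraticChar (ZMod p) (-1) := by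
        rw [← map_mul]
        have : -b * b = -1 * b ^ 2 := by ring
        rw [this, map_mul, quadraticChar_sq_one' hb, mul_one]
      calc quadraticChar (ZMod p) (-b) * quadraticChar (ZMod p) s *
            (quadraticChar (ZMod p) b * quadraticChar (ZMod p) (1 - s))
          = (quadraticChar (ZMod p) (-b) * quadraticChar (ZMod p) b) *
            (quadraticChar (ZMod p) s * quadraticChar (ZMod p) (1 - s)) := by ring
        _ = _ := by rw [h3]
    rw [Finset.sum_congr rfl fun s _ => h2 s, ← Finset.mul_sum]
    have hjac : ∑ s : ZMod p, quadraticChar (ZMod p) s * quadraticChar (ZMod p) (1 - s)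
        = jacobiSum (quadraticChar (ZMod p)) (quadraticChar (ZMod p)) := rfl
    have hJ := jacobiSum_nontrivial_inv (quadraticChar_ne_one hF) (χ := quadraticChar (ZMod p))
    rw [(quadraticChar_isQuadratic (ZMod p)).inv] at hJ
    rw [hjac, hJ]
    have hne : (-1 : ZMod p) ≠ 0 := neg_ne_zero.mpr one_ne_zero
    have := quadraticChar_sq_one hne
    nlinarith [this]

private lemma smtp_inner_sum {p : ℕ} [Fact p.Prime] (hp : 5 ≤ p) (t x y : ZMod p) :
    ∑ s : ZMod p,
      quadraticChar (ZMod p) (x ^ 3 + s * x ^ 2 - t ^ 2 * x) *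
      quadraticChar (ZMod p) (y ^ 3 + s * y ^ 2 - t ^ 2 * y)
    = if x = 0 ∨ y = 0 then 0
      else if x = y ∨ x * y = -t ^ 2 then (p : ℤ) - 1 else -1 := by
  rcases eq_or_ne x 0 with hx | hx
  · rw [if_pos (Or.inl hx)]
    apply Finset.sum_eq_zero
    intro s _
    rw [hx]
    norm_num
  rcases eq_or_ne y 0 with hy | hy
  · rw [if_pos (Or.inr hy)]
    apply Finset.sum_eq_zero
    intro s _
    rw [hy]
    norm_num
  rw [if_neg (by push_neg; exact ⟨hx, hy⟩)]
  set rx : ZMod p := (t ^ 2 - x ^ 2) * x⁻¹ with hrx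
  set ry : ZMod p := (t ^ 2 - y ^ 2) * y⁻¹ with hry
  have hfx : ∀ s : ZMod p, x ^ 3 + s * x ^ 2 - t ^ 2 * x = x ^ 2 * (s - rx) := by
    intro s; rw [hrx]; field_simp; ring
  have hfy : ∀ s : ZMod p, y ^ 3 + s * y ^ 2 - t ^ 2 * y = y ^ 2 * (s - ry) := by
    intro s; rw [hry]; field_simp; ring
  have hterm : ∀ s : ZMod p,
      quadraticChar (ZMod p) (x ^ 3 + s * x ^ 2 - t ^ 2 * x) *
      quadraticChar (ZMod p) (y ^ 3 + s * y ^ 2 - t ^ 2 * y)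
      = quadraticChar (ZMod p) (s - rx) * quadraticChar (ZMod p) (s - ry) := by
    intro s
    rw [hfx s, hfy s, map_mul, map_mul, quadraticChar_sq_one' hx, quadraticChar_sq_one' hy,
      one_mul, one_mul]
  rw [Finset.sum_congr rfl fun s _ => hterm s]
  have hre : ∑ s : ZMod p, quadraticChar (ZMod p) (s - rx) * quadraticChar (ZMod p) (s - ry)
      = ∑ s : ZMod p, quadraticChar (ZMod p) s * quadraticChar (ZMod p) (s + (rx - ry)) := by
    refine (Fintype.sum_equiv (Equiv.addRight rx) _ _ ?_).symm
    intro s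
    simp only [Equiv.coe_addRight]
    congr 1 <;> congr 1 <;> ring
  rw [hre, smtp_sum_shift hp]
  congr 1
  have hcond : rx - ry = 0 ↔ (x = y ∨ x * y = -t ^ 2) := by
    have hkey : rx - ry = (y - x) * (t ^ 2 + x * y) * (x⁻¹ * y⁻¹) := by
      rw [hrx, hry]; field_simp; ring
    rw [hkey, mul_eq_zero, mul_eq_zero]
    have hxi : x⁻¹ ≠ 0 := inv_ne_zero hx
    have hyi : y⁻¹ ≠ 0 := inv_ne_zero hy
    constructor
    · rintro ((h | h) | h)
      · left; rw [sub_eq_zero] at h; exact h.symm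
      · right
        have : x * y = -t ^ 2 := by linear_combination h
        exact this
      · exact absurd h (by rw [mul_eq_zero]; push_neg; exact ⟨hxi, hyi⟩)
    · rintro (h | h)
      · left; left; rw [sub_eq_zero, h]
      · left; right; linear_combination h
  exact propext hcond

private lemma smtp_t_sum {p : ℕ} [Fact p.Prime] (hp : 5 ≤ p) (x y : ZMod p)
    (hx : x ≠ 0) (hy : y ≠ 0) :
    ∑ t : ZMod p, (if x = y ∨ x * y = -t ^ 2 then (p : ℤ) - 1 else -1)
    = if x = y then (p : ℤ) * ((p : ℤ) - 1)
      else (p : ℤ) * quadraticChar (ZMod p) (-(x * y)) := by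
  have hF := smtp_char_ne_two hp
  rcases eq_or_ne x y with hxy | hxy
  · rw [if_pos hxy]
    have : ∀ t : ZMod p, (if x = y ∨ x * y = -t ^ 2 then (p : ℤ) - 1 else -1) = (p : ℤ) - 1 := by
      intro t; rw [if_pos (Or.inl hxy)]
    rw [Finset.sum_congr rfl fun t _ => this t, Finset.sum_const, Finset.card_univ, ZMod.card,
      nsmul_eq_mul]
  · rw [if_neg hxy]
    have hstep : ∀ t : ZMod p, (if x = y ∨ x * y = -t ^ 2 then (p : ℤ) - 1 else -1)
        = (if t ^ 2 = -(x * y) then (p : ℤ) else 0) + (-1) := by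
      intro t
      have hiff : (x = y ∨ x * y = -t ^ 2) ↔ t ^ 2 = -(x * y) := by
        constructor
        · rintro (h | h)
          · exact absurd h hxy
          · linear_combination h
        · intro h; right; linear_combination h
      by_cases h : t ^ 2 = -(x * y)
      · rw [if_pos (hiff.mpr h), if_pos h]; ring
      · rw [if_neg (fun hc => h (hiff.mp hc)), if_neg h]; ring
    rw [Finset.sum_congr rfl fun t _ => hstep t, Finset.sum_add_distrib, Finset.sum_ite,
      Finset.sum_const, Finset.sum_const, smul_zero, add_zero, Finset.sum_const,
      Finset.card_univ, ZMod.card, nsmul_eq_mul]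
    have hcard := quadraticChar_card_sqrts hF (-(x * y))
    have hfilter : ({t : ZMod p | t ^ 2 = -(x * y)} : Set (ZMod p)).toFinset
        = Finset.univ.filter (fun t : ZMod p => t ^ 2 = -(x * y)) := by
      ext t; simp
    rw [hfilter] at hcard
    rw [hcard]
    ring

private lemma smtp_chi_neg_one {p : ℕ} [Fact p.Prime] (hp : 5 ≤ p) :
    quadraticChar (ZMod p) (-1) = if p % 4 = 1 then 1 else -1 := by
  haveI : Fact (1 < p) := ⟨by omega⟩
  have hne : (-1 : ZMod p) ≠ 0 := neg_ne_zero.mpr one_ne_zero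
  have hodd : p % 2 = 1 :=
    Nat.odd_iff.mp ((Fact.out : p.Prime).odd_of_ne_two (by omega))
  by_cases h : p % 4 = 1
  · rw [if_pos h]
    exact (quadraticChar_one_iff_isSquare hne).mpr
      (ZMod.exists_sq_eq_neg_one_iff.mpr (by omega))
  · rw [if_neg h]
    have h3 : p % 4 = 3 := by omega
    exact quadraticChar_neg_one_iff_not_isSquare.mpr
      (fun hs => by have := ZMod.exists_sq_eq_neg_one_iff.mp hs; omega)

private lemma smtp_y_sum {p : ℕ} [Fact p.Prime] (hp : 5 ≤ p) (x : ZMod p) (hx : x ≠ 0) :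
    ∑ y : ZMod p, (if x = 0 ∨ y = 0 then (0 : ℤ)
        else if x = y then (p : ℤ) * ((p : ℤ) - 1)
        else (p : ℤ) * quadraticChar (ZMod p) (-(x * y)))
    = (p : ℤ) * ((p : ℤ) - 1) - (p : ℤ) * quadraticChar (ZMod p) (-1) := by
  have hF := smtp_char_ne_two hp
  have hdecomp : ∀ y : ZMod p,
      (if x = 0 ∨ y = 0 then (0 : ℤ)
        else if x = y then (p : ℤ) * ((p : ℤ) - 1)
        else (p : ℤ) * quadraticChar (ZMod p) (-(x * y)))
      = (p : ℤ) * quadraticChar (ZMod p) (-x * y)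
        + (if y = x then ((p : ℤ) * ((p : ℤ) - 1) - (p : ℤ) * quadraticChar (ZMod p) (-1))
           else 0) := by
    intro y
    have hchixx : quadraticChar (ZMod p) (-x * x) = quadraticChar (ZMod p) (-1) := by
      have : -x * x = -1 * x ^ 2 := by ring
      rw [this, map_mul, quadraticChar_sq_one' hx, mul_one]
    rcases eq_or_ne y 0 with hy | hy
    · subst hy
      rw [if_pos (Or.inr rfl), if_neg (fun h : (0 : ZMod p) = x => hx h.symm), mul_zero,
        MulChar.map_zero, mul_zero, add_zero]
    · rcases eq_or_ne y x with hyx | hyx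
      · subst hyx
        rw [if_neg (by push_neg; exact ⟨hx, hy⟩), if_pos rfl, if_pos rfl, hchixx]
        ring
      · rw [if_neg (by push_neg; exact ⟨hx, hy⟩), if_neg (fun h => hyx h.symm), if_neg hyx,
          add_zero, neg_mul]
  rw [Finset.sum_congr rfl fun y _ => hdecomp y, Finset.sum_add_distrib, ← Finset.mul_sum]
  have hzero : ∑ y : ZMod p, quadraticChar (ZMod p) (-x * y) = 0 := by
    have := Fintype.sum_equiv (Equiv.mulLeft₀ (-x) (neg_ne_zero.mpr hx))
      (fun y => quadraticChar (ZMod p) (-x * y)) (fun y => quadraticChar (ZMod p) y)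
      (fun y => rfl)
    rw [this, quadraticChar_sum_zero hF]
  rw [hzero, mul_zero, zero_add, Finset.sum_ite_eq' Finset.univ x, if_pos (Finset.mem_univ x)]

/-- For a prime `p ≥ 5` and the two-parameter family
`y² = x³ + s x² - t² x`, the second-moment sum equals
`p³ - p² - δ_{1,4}(p) (2p² - 2p)`. -/
theorem second_moment_two_param_three (p : ℕ) [Fact p.Prime] (hp : 5 ≤ p) :
    ∑ t : ZMod p, ∑ s : ZMod p,
      (-∑ x : ZMod p,
        legendreSym p ((x.val : ℤ) ^ 3 + (s.val : ℤ) * (x.val : ℤ) ^ 2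
          - (t.val : ℤ) ^ 2 * (x.val : ℤ))) ^ 2 =
      (p : ℤ) ^ 3 - (p : ℤ) ^ 2
        - (if p % 4 = 1 then 1 else 0) * (2 * (p : ℤ) ^ 2 - 2 * (p : ℤ)) := by
  have hF := smtp_char_ne_two hp
  haveI : Fact (1 < p) := ⟨by omega⟩
  have hchi : ∀ t s x : ZMod p,
      legendreSym p ((x.val : ℤ) ^ 3 + (s.val : ℤ) * (x.val : ℤ) ^ 2
          - (t.val : ℤ) ^ 2 * (x.val : ℤ))
      = quadraticChar (ZMod p) (x ^ 3 + s * x ^ 2 - t ^ 2 * x) := by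
    intro t s x
    simp only [legendreSym]
    congr 1
    push_cast [ZMod.natCast_val, ZMod.cast_id]
    ring
  calc ∑ t : ZMod p, ∑ s : ZMod p,
      (-∑ x : ZMod p,
        legendreSym p ((x.val : ℤ) ^ 3 + (s.val : ℤ) * (x.val : ℤ) ^ 2
          - (t.val : ℤ) ^ 2 * (x.val : ℤ))) ^ 2
      = ∑ t : ZMod p, ∑ s : ZMod p, ∑ x : ZMod p, ∑ y : ZMod p,
          quadraticChar (ZMod p) (x ^ 3 + s * x ^ 2 - t ^ 2 * x) *
          quadraticChar (ZMod p) (y ^ 3 + s * y ^ 2 - t ^ 2 * y) := by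
        refine Finset.sum_congr rfl fun t _ => Finset.sum_congr rfl fun s _ => ?_
        rw [neg_sq, sq, Finset.sum_mul_sum]
        exact Finset.sum_congr rfl fun x _ => Finset.sum_congr rfl fun y _ => by
          rw [hchi, hchi]
    _ = ∑ t : ZMod p, ∑ x : ZMod p, ∑ y : ZMod p, ∑ s : ZMod p,
          quadraticChar (ZMod p) (x ^ 3 + s * x ^ 2 - t ^ 2 * x) *
          quadraticChar (ZMod p) (y ^ 3 + s * y ^ 2 - t ^ 2 * y) := by
        refine Finset.sum_congr rfl fun t _ => ?_
        rw [Finset.sum_comm]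
        exact Finset.sum_congr rfl fun x _ => Finset.sum_comm
    _ = ∑ t : ZMod p, ∑ x : ZMod p, ∑ y : ZMod p,
          (if x = 0 ∨ y = 0 then (0 : ℤ)
            else if x = y ∨ x * y = -t ^ 2 then (p : ℤ) - 1 else -1) := by
        exact Finset.sum_congr rfl fun t _ => Finset.sum_congr rfl fun x _ =>
          Finset.sum_congr rfl fun y _ => smtp_inner_sum hp t x y
    _ = ∑ x : ZMod p, ∑ y : ZMod p, ∑ t : ZMod p,
          (if x = 0 ∨ y = 0 then (0 : ℤ)
            else if x = y ∨ x * y = -t ^ 2 then (p : ℤ) - 1 else -1) := by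
        rw [Finset.sum_comm]
        exact Finset.sum_congr rfl fun x _ => Finset.sum_comm
    _ = ∑ x : ZMod p, ∑ y : ZMod p,
          (if x = 0 ∨ y = 0 then (0 : ℤ)
            else if x = y then (p : ℤ) * ((p : ℤ) - 1)
            else (p : ℤ) * quadraticChar (ZMod p) (-(x * y))) := by
        refine Finset.sum_congr rfl fun x _ => Finset.sum_congr rfl fun y _ => ?_
        by_cases h : x = 0 ∨ y = 0
        · simp [h]
        · push_neg at h
          rw [if_neg (by push_neg; exact h)]
          rw [Finset.sum_congr rfl fun t _ => if_neg (by push_neg; exact h)]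
          exact smtp_t_sum hp x y h.1 h.2
    _ = ∑ x : ZMod p,
          (if x = 0 then (0 : ℤ)
            else (p : ℤ) * ((p : ℤ) - 1) - (p : ℤ) * quadraticChar (ZMod p) (-1)) := by
        refine Finset.sum_congr rfl fun x _ => ?_
        rcases eq_or_ne x 0 with hx | hx
        · rw [if_pos hx]
          exact Finset.sum_eq_zero fun y _ => by rw [if_pos (Or.inl hx)]
        · rw [if_neg hx]
          exact smtp_y_sum hp x hx
    _ = ((p : ℤ) - 1) *
          ((p : ℤ) * ((p : ℤ) - 1) - (p : ℤ) * quadraticChar (ZMod p) (-1)) := by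
        rw [Finset.sum_ite, Finset.sum_const, Finset.sum_const, smul_zero, zero_add,
          Finset.filter_ne', Finset.card_erase_of_mem (Finset.mem_univ _), Finset.card_univ,
          ZMod.card, nsmul_eq_mul]
        have : (1:ℕ) ≤ p := by omega
        push_cast [Nat.cast_sub this]
        ring
    _ = (p : ℤ) ^ 3 - (p : ℤ) ^ 2
        - (if p % 4 = 1 then 1 else 0) * (2 * (p : ℤ) ^ 2 - 2 * (p : ℤ)) := by
        rw [smtp_chi_neg_one hp]
        by_cases h : p % 4 = 1
        · rw [if_pos h, if_pos h]; ring
        · rw [if_neg h, if_neg h]; ring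
end

section
/- Let p ≥ 5 be a prime. For the two-parameter family y² = x³ + t² x² + (t³ − t²) s x, the second-moment sum satisfies ∑_{t mod p} ∑_{s mod p} a_{t,s}(p)² = p³ − 3p² + 3p − δ_{1,4}(p)·(2p² − 4p), where a_{t,s}(p) := −∑_{x mod p} χ(x³ + t² x² + (t³ − t²) s x). -/
open Finset

section aux
variable {p : ℕ} [Fact p.Prime]

local notation "χ" => quadraticChar (ZMod p)

lemma key_shift (hp2 : p ≠ 2) {d : ZMod p} (hd : d ≠ 0) :
    ∑ z : ZMod p, χ (z * (z + d)) = -1 := by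
  have hchar : ringChar (ZMod p) ≠ 2 := by
    rw [ZMod.ringChar_zmod_n]; exact hp2
  have h0 : ∑ z : ZMod p, χ (z * (z + d)) =
      ∑ z ∈ univ.erase (0 : ZMod p), χ (z * (z + d)) := by
    rw [Finset.sum_erase]
    simp
  rw [h0]
  have h1 : ∑ z ∈ univ.erase (0 : ZMod p), χ (z * (z + d)) =
      ∑ w ∈ univ.erase (1 : ZMod p), χ w := by
    refine Finset.sum_nbij' (fun z => 1 + d * z⁻¹) (fun w => d * (w - 1)⁻¹) ?_ ?_ ?_ ?_ ?_
    · intro z hz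
      simp only [mem_erase, mem_univ, and_true] at hz ⊢
      intro h
      have : d * z⁻¹ = 0 := by linear_combination h
      rcases mul_eq_zero.mp this with h' | h'
      · exact hd h'
      · exact hz (inv_eq_zero.mp h')
    · intro w hw
      simp only [mem_erase, mem_univ, and_true] at hw ⊢
      intro h
      rcases mul_eq_zero.mp h with h' | h'
      · exact hd h'
      · exact hw (by linear_combination inv_eq_zero.mp h')
    · intro z hz
      simp only [mem_erase, mem_univ, and_true] at hz
      field_simp
      rw [show z + d - z = d by ring, div_self hd]
    · intro w hw
      simp only [mem_erase, mem_univ, and_true] at hw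
      have : w - 1 ≠ 0 := sub_ne_zero.mpr hw
      field_simp
      ring
    · intro z hz
      simp only [mem_erase, mem_univ, and_true] at hz
      have harg : z * (z + d) = z ^ 2 * (1 + d * z⁻¹) := by
        field_simp
      rw [harg, map_mul, quadraticChar_sq_one' hz, one_mul]
  rw [h1, Finset.sum_erase_eq_sub (mem_univ _), quadraticChar_sum_zero hchar]
  simp

lemma key_prod (hp2 : p ≠ 2) (u v : ZMod p) :
    ∑ b : ZMod p, χ ((b + u) * (b + v)) =
      if u = v then (p : ℤ) - 1 else -1 := by
  split_ifs with h
  · subst h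
    have : ∀ b : ZMod p, χ ((b + u) * (b + u)) = if b = -u then 0 else 1 := by
      intro b
      split_ifs with hb
      · subst hb; simp
      · rw [← sq, quadraticChar_sq_one']
        intro hc; exact hb (by linear_combination hc)
    simp only [this]
    rw [Finset.sum_ite, Finset.sum_const, Finset.sum_const, Finset.filter_eq']
    simp only [mem_univ, if_true, Finset.filter_ne', Finset.card_singleton,
      Finset.card_erase_of_mem (mem_univ _), Finset.card_univ, ZMod.card]
    have hp1 : 1 ≤ p := (Fact.out : p.Prime).one_lt.le
    simp only [nsmul_eq_mul, mul_zero, mul_one, zero_add]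
    rw [Nat.cast_sub hp1]
    push_cast
    ring
  · have hbij : Function.Bijective (fun b : ZMod p => b - u) :=
      (Equiv.subRight u).bijective
    rw [← Fintype.sum_bijective _ hbij _ (fun b => χ ((b + u) * (b + v)))
      (fun b => rfl)]
    have : ∀ b : ZMod p, χ ((b - u + u) * (b - u + v)) = χ (b * (b + (v - u))) := by
      intro b; congr 1; ring
    rw [Finset.sum_congr rfl (fun b _ => this b)]
    exact key_shift hp2 (sub_ne_zero.mpr (Ne.symm h))

end aux

section aux2
variable {p : ℕ} [Fact p.Prime]

local notation "χ" => quadraticChar (ZMod p)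

lemma chi_mul_self (x : ZMod p) : χ x * χ x = if x = 0 then 0 else 1 := by
  split_ifs with hx
  · subst hx; simp
  · rw [← map_mul, show x * x = x ^ 2 by ring, quadraticChar_sq_one' hx]

lemma sum_ite_zero_one (c : ZMod p) :
    ∑ x : ZMod p, (if x = c then (0:ℤ) else 1) = (p : ℤ) - 1 := by
  rw [Finset.sum_ite, Finset.sum_const, Finset.sum_const, Finset.filter_eq']
  simp only [Finset.mem_univ, if_true, Finset.filter_ne', Finset.card_singleton,
    Finset.card_erase_of_mem (Finset.mem_univ _), Finset.card_univ, ZMod.card]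
  have hp1 : 1 ≤ p := (Fact.out : p.Prime).one_lt.le
  simp only [nsmul_eq_mul, mul_zero, mul_one, zero_add]
  rw [Nat.cast_sub hp1]
  push_cast
  ring

lemma per_A (hp2 : p ≠ 2) {A : ZMod p} (hA : A ≠ 0) :
    ∑ b : ZMod p, (∑ x : ZMod p, χ (x ^ 3 + A * x ^ 2 + b * x)) ^ 2
      = (p : ℤ) * ((p : ℤ) - 2 - χ (-1)) := by
  have hchar : ringChar (ZMod p) ≠ 2 := by
    rw [ZMod.ringChar_zmod_n]; exact hp2
  have h2 : (2 : ZMod p) ≠ 0 := by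
    have := (Fact.out : p.Prime)
    intro h
    rw [show (2 : ZMod p) = ((2 : ℕ) : ZMod p) by norm_num,
      ZMod.natCast_eq_zero_iff] at h
    exact hp2 ((Nat.prime_dvd_prime_iff_eq this Nat.prime_two).mp h)
  have step1 : ∀ b : ZMod p, (∑ x : ZMod p, χ (x ^ 3 + A * x ^ 2 + b * x)) ^ 2
      = ∑ x : ZMod p, ∑ y : ZMod p,
          χ ((b + (x ^ 2 + A * x)) * (b + (y ^ 2 + A * y))) * (χ x * χ y) := by
    intro b
    have hx : ∀ x : ZMod p, χ (x ^ 3 + A * x ^ 2 + b * x)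
        = χ x * χ (b + (x ^ 2 + A * x)) := by
      intro x
      rw [← map_mul]
      congr 1; ring
    rw [sq, Finset.sum_mul_sum]
    simp only [hx]
    refine Finset.sum_congr rfl fun x _ => Finset.sum_congr rfl fun y _ => ?_
    rw [map_mul]; ring
  calc ∑ b : ZMod p, (∑ x : ZMod p, χ (x ^ 3 + A * x ^ 2 + b * x)) ^ 2
      = ∑ b : ZMod p, ∑ x : ZMod p, ∑ y : ZMod p,
          χ ((b + (x ^ 2 + A * x)) * (b + (y ^ 2 + A * y))) * (χ x * χ y) :=
        Finset.sum_congr rfl fun b _ => step1 b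
    _ = ∑ x : ZMod p, ∑ y : ZMod p, ∑ b : ZMod p,
          χ ((b + (x ^ 2 + A * x)) * (b + (y ^ 2 + A * y))) * (χ x * χ y) := by
        rw [Finset.sum_comm]
        exact Finset.sum_congr rfl fun x _ => Finset.sum_comm
    _ = ∑ x : ZMod p, ∑ y : ZMod p,
          (if (x ^ 2 + A * x) = (y ^ 2 + A * y) then (p : ℤ) - 1 else -1)
            * (χ x * χ y) := by
        refine Finset.sum_congr rfl fun x _ => Finset.sum_congr rfl fun y _ => ?_
        rw [← Finset.sum_mul, key_prod hp2]
    _ = (p : ℤ) * ((p : ℤ) - 2 - χ (-1)) := ?_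
  have hiff : ∀ x y : ZMod p,
      (x ^ 2 + A * x = y ^ 2 + A * y) ↔ (y = x ∨ y = -x - A) := by
    intro x y
    constructor
    · intro h
      have h0 : (x - y) * (x + y + A) = 0 := by linear_combination h
      rcases mul_eq_zero.mp h0 with h' | h'
      · exact Or.inl (sub_eq_zero.mp h').symm
      · exact Or.inr (by linear_combination h')
    · rintro (rfl | rfl)
      · rfl
      · ring
  have expand : ∀ x y : ZMod p,
      (if (x ^ 2 + A * x) = (y ^ 2 + A * y) then (p : ℤ) - 1 else -1) * (χ x * χ y)
        = ((if y = x then (p : ℤ) * (χ x * χ y) else 0)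
            + (if y = -x - A then (p : ℤ) * (χ x * χ y) else 0)
            - (if y = x then (if y = -x - A then (p : ℤ) * (χ x * χ y) else 0) else 0))
          - χ x * χ y := by
    intro x y
    by_cases h1 : y = x <;> by_cases h2 : y = -x - A <;>
      simp only [hiff, h1, h2, if_true, if_false, true_or, or_true, or_self,
        eq_self_iff_true] <;>
      ring
  simp only [expand]
  have inner : ∀ x : ZMod p,
      (∑ y : ZMod p,
        (((if y = x then (p : ℤ) * (χ x * χ y) else 0)
            + (if y = -x - A then (p : ℤ) * (χ x * χ y) else 0)
            - (if y = x then (if y = -x - A then (p : ℤ) * (χ x * χ y) else 0) else 0))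
          - χ x * χ y))
      = (p : ℤ) * (χ x * χ x) + (p : ℤ) * (χ x * χ (-x - A))
          - (if x = -x - A then (p : ℤ) * (χ x * χ x) else 0) := by
    intro x
    rw [Finset.sum_sub_distrib, Finset.sum_sub_distrib, Finset.sum_add_distrib]
    rw [Finset.sum_ite_eq' Finset.univ x (fun y => (p : ℤ) * (χ x * χ y)),
      Finset.sum_ite_eq' Finset.univ (-x - A) (fun y => (p : ℤ) * (χ x * χ y)),
      Finset.sum_ite_eq' Finset.univ x
        (fun y => if y = -x - A then (p : ℤ) * (χ x * χ y) else 0),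
      ← Finset.mul_sum, quadraticChar_sum_zero hchar]
    simp
  simp only [inner]
  rw [Finset.sum_sub_distrib, Finset.sum_add_distrib, ← Finset.mul_sum, ← Finset.mul_sum]
  have hs1 : ∑ x : ZMod p, χ x * χ x = (p : ℤ) - 1 := by
    simp only [chi_mul_self]
    exact sum_ite_zero_one 0
  have hs2 : ∑ x : ZMod p, χ x * χ (-x - A) = -χ (-1) := by
    have : ∀ x : ZMod p, χ x * χ (-x - A) = χ (-1) * χ (x * (x + A)) := by
      intro x
      rw [← map_mul, ← map_mul]
      congr 1; ring
    simp only [this]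
    rw [← Finset.mul_sum, key_shift hp2 hA, mul_neg_one]
  have hs3 : ∑ x : ZMod p, (if x = -x - A then (p : ℤ) * (χ x * χ x) else 0)
      = (p : ℤ) := by
    have hcond : ∀ x : ZMod p, (x = -x - A) ↔ (x = -A * 2⁻¹) := by
      intro x
      constructor
      · intro h
        have h2x : x * 2 = -A := by linear_combination h
        field_simp at h2x ⊢
        linear_combination h2x
      · intro h
        subst h
        field_simp
        ring
    simp only [hcond]
    rw [Finset.sum_ite_eq' Finset.univ (-A * 2⁻¹) (fun x => (p : ℤ) * (χ x * χ x))]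
    have hx0 : (-A * 2⁻¹ : ZMod p) ≠ 0 := by
      simp [hA, inv_ne_zero h2]
    rw [if_pos (Finset.mem_univ _), chi_mul_self, if_neg hx0, mul_one]
  rw [hs1, hs2, hs3]
  ring

end aux2

/-- For a prime `p ≥ 5` and the two-parameter family
`y² = x³ + t² x² + (t³ - t²) s x`, the second-moment sum equals
`p³ - 3p² + 3p - δ_{1,4}(p) (2p² - 4p)`. -/
theorem second_moment_two_param_four (p : ℕ) [Fact p.Prime] (hp : 5 ≤ p) :
    ∑ t : ZMod p, ∑ s : ZMod p,
      (-∑ x : ZMod p,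
        legendreSym p ((x.val : ℤ) ^ 3 + (t.val : ℤ) ^ 2 * (x.val : ℤ) ^ 2
          + ((t.val : ℤ) ^ 3 - (t.val : ℤ) ^ 2) * (s.val : ℤ) * (x.val : ℤ))) ^ 2 =
      (p : ℤ) ^ 3 - 3 * (p : ℤ) ^ 2 + 3 * (p : ℤ)
        - (if p % 4 = 1 then 1 else 0) * (2 * (p : ℤ) ^ 2 - 4 * (p : ℤ)) := by
  have hp' : p.Prime := Fact.out
  have hp2 : p ≠ 2 := by omega
  have hchar : ringChar (ZMod p) ≠ 2 := by
    rw [ZMod.ringChar_zmod_n]; exact hp2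
  set χf := quadraticChar (ZMod p) with hχf
  -- rewrite legendreSym values
  have hrw : ∀ t s : ZMod p,
      (-∑ x : ZMod p,
        legendreSym p ((x.val : ℤ) ^ 3 + (t.val : ℤ) ^ 2 * (x.val : ℤ) ^ 2
          + ((t.val : ℤ) ^ 3 - (t.val : ℤ) ^ 2) * (s.val : ℤ) * (x.val : ℤ))) ^ 2
      = (∑ x : ZMod p, χf (x ^ 3 + t ^ 2 * x ^ 2 + (t ^ 3 - t ^ 2) * s * x)) ^ 2 := by
    intro t s
    rw [neg_sq]
    congr 1
    refine Finset.sum_congr rfl fun x _ => ?_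
    show quadraticChar (ZMod p) _ = _
    congr 1
    push_cast [ZMod.natCast_val, ZMod.cast_id]
    ring
  simp only [hrw]
  set G : ZMod p → ℤ :=
    fun t => ∑ s : ZMod p, (∑ x : ZMod p, χf (x ^ 3 + t ^ 2 * x ^ 2 + (t ^ 3 - t ^ 2) * s * x)) ^ 2
    with hG
  show ∑ t : ZMod p, G t = _
  have h01 : (0 : ZMod p) ≠ 1 := zero_ne_one
  have hsub : ({0, 1} : Finset (ZMod p)) ⊆ Finset.univ := Finset.subset_univ _
  have hsplit : ∑ t : ZMod p, G t
      = (∑ t ∈ Finset.univ \ {0, 1}, G t) + (G 0 + G 1) := by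
    rw [← Finset.sum_pair h01, Finset.sum_sdiff hsub]
  have hG0 : G 0 = 0 := by
    simp only [hG]
    have : ∀ s x : ZMod p,
        χf (x ^ 3 + (0:ZMod p) ^ 2 * x ^ 2 + ((0:ZMod p) ^ 3 - (0:ZMod p) ^ 2) * s * x)
          = χf x := by
      intro s x
      have harg : x ^ 3 + (0:ZMod p) ^ 2 * x ^ 2 + ((0:ZMod p) ^ 3 - (0:ZMod p) ^ 2) * s * x
          = x ^ 2 * x := by ring
      rw [harg, map_mul]
      by_cases hx : x = 0
      · subst hx; rw [hχf]; simp
      · rw [quadraticChar_sq_one' hx, one_mul]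
    simp only [this]
    rw [quadraticChar_sum_zero hchar]
    simp
  have hG1 : G 1 = (p : ℤ) := by
    simp only [hG]
    have hin : ∀ s : ZMod p,
        ∑ x : ZMod p,
          χf (x ^ 3 + (1:ZMod p) ^ 2 * x ^ 2 + ((1:ZMod p) ^ 3 - (1:ZMod p) ^ 2) * s * x)
        = -1 := by
      intro s
      have h1 : ∀ x : ZMod p,
          χf (x ^ 3 + (1:ZMod p) ^ 2 * x ^ 2 + ((1:ZMod p) ^ 3 - (1:ZMod p) ^ 2) * s * x)
          = χf (x ^ 2) * χf (x + 1) := by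
        intro x
        rw [← map_mul]
        congr 1; ring
      simp only [h1]
      have h2 : ∀ x : ZMod p, χf (x ^ 2) * χf (x + 1)
          = χf (x + 1) - (if x = 0 then χf (x + 1) else 0) := by
        intro x
        by_cases hx : x = 0
        · subst hx; rw [hχf]; simp
        · rw [quadraticChar_sq_one' hx, if_neg hx, one_mul, sub_zero]
      simp only [h2]
      rw [Finset.sum_sub_distrib,
        Finset.sum_ite_eq' Finset.univ (0 : ZMod p) (fun x => χf (x + 1))]
      have h3 : ∑ x : ZMod p, χf (x + 1) = ∑ x : ZMod p, χf x :=
        Fintype.sum_bijective (fun x : ZMod p => x + 1) (Equiv.addRight 1).bijective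
          (fun x => χf (x + 1)) χf (fun x => rfl)
      rw [h3, quadraticChar_sum_zero hchar]
      simp
    simp only [hin]
    simp [Finset.sum_const, Finset.card_univ, ZMod.card]
  have hGt : ∀ t : ZMod p, t ≠ 0 → t ≠ 1 →
      G t = (p : ℤ) * ((p : ℤ) - 2 - χf (-1)) := by
    intro t ht0 ht1
    simp only [hG]
    have hc : (t ^ 3 - t ^ 2 : ZMod p) ≠ 0 := by
      have : (t ^ 3 - t ^ 2 : ZMod p) = t ^ 2 * (t - 1) := by ring
      rw [this]
      exact mul_ne_zero (pow_ne_zero 2 ht0) (sub_ne_zero.mpr ht1)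
    have hA : (t ^ 2 : ZMod p) ≠ 0 := pow_ne_zero 2 ht0
    have hre : ∑ s : ZMod p,
          (∑ x : ZMod p, χf (x ^ 3 + t ^ 2 * x ^ 2 + (t ^ 3 - t ^ 2) * s * x)) ^ 2
        = ∑ b : ZMod p, (∑ x : ZMod p, χf (x ^ 3 + t ^ 2 * x ^ 2 + b * x)) ^ 2 := by
      refine Fintype.sum_bijective (fun s : ZMod p => (t ^ 3 - t ^ 2) * s)
        (mulLeft_bijective₀ _ hc) _ _ (fun s => rfl)
    rw [hre]
    exact per_A hp2 hA
  have hcard : (Finset.univ \ ({0, 1} : Finset (ZMod p))).card = p - 2 := by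
    rw [Finset.card_sdiff_of_subset hsub, Finset.card_univ, ZMod.card]
    congr 1
    rw [Finset.card_pair h01]
  have hconst : ∑ t ∈ Finset.univ \ ({0, 1} : Finset (ZMod p)), G t
      = ((p : ℤ) - 2) * ((p : ℤ) * ((p : ℤ) - 2 - χf (-1))) := by
    have hcg : ∑ t ∈ Finset.univ \ ({0, 1} : Finset (ZMod p)), G t
        = ∑ _t ∈ Finset.univ \ ({0, 1} : Finset (ZMod p)),
            ((p : ℤ) * ((p : ℤ) - 2 - χf (-1))) := by
      refine Finset.sum_congr rfl (fun t ht => ?_)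
      rw [Finset.mem_sdiff, Finset.mem_insert, Finset.mem_singleton] at ht
      push_neg at ht
      exact hGt t ht.2.1 ht.2.2
    rw [hcg, Finset.sum_const, hcard, nsmul_eq_mul, Nat.cast_sub (by omega : 2 ≤ p)]
    push_cast
    ring
  have hε : χf (-1) = if p % 4 = 1 then 1 else -1 := by
    rw [hχf, quadraticChar_neg_one hchar, ZMod.card, ZMod.χ₄_nat_eq_if_mod_four]
    have hodd : p % 2 = 1 := Nat.odd_iff.mp (hp'.odd_of_ne_two hp2)
    simp [hodd]
  rw [hsplit, hG0, hG1, hconst, hε]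
  by_cases h4 : p % 4 = 1
  · simp only [h4, if_true]
    ring
  · simp only [h4, if_false]
    ring
end
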